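/- arXiv:1202.2203 — 2 statements merged into one kernel-verified Lean document; each statement's English description precedes it below -/
import Mathlib

section
/- Let n ≥ 4, let T ∈ 𝒯_n, and let θ ∈ O_NNI(T) be an NNI operation on T. Then there are precisely four distinct operations θ' ∈ O_NNI(T) such that θ'(T) = θ(T). -/
/-!
Formalization framework for unrooted binary phylogenetic trees on the
leaf set `Fin n`, encoded via their split systems (Buneman's
splits-equivalence theorem: a binary phylogenetic tree is uniquely
determined by its set of splits, which is a maximal pairwise-compatible
collection of proper bipartitions of the leaf set containing all
trivial splits).  A split `A | Aᶜ` is recorded by storing both of its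
sides.
-/

/-- Two sides (subsets of leaves) are compatible: the corresponding
splits can coexist in a tree. -/
def SidesCompatible {n : ℕ} (A B : Finset (Fin n)) : Prop :=
  A ⊆ B ∨ B ⊆ A ∨ Disjoint A B ∨ A ∪ B = Finset.univ

/-- An unrooted binary phylogenetic tree on leaf set `Fin n`,
represented by the set of sides of its splits. -/
structure PhyloTree (n : ℕ) where
  sides : Finset (Finset (Fin n))
  proper : ∀ A ∈ sides, A.Nonempty ∧ A ≠ Finset.univ
  compl_mem : ∀ A ∈ sides, Aᶜ ∈ sides
  singleton_mem : ∀ x : Fin n, {x} ∈ sides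
  compatible : ∀ A ∈ sides, ∀ B ∈ sides, SidesCompatible A B
  maximal : ∀ A : Finset (Fin n), A.Nonempty → A ≠ Finset.univ →
    (∀ B ∈ sides, SidesCompatible A B) → A ∈ sides

namespace PhyloTree

variable {n : ℕ}

/-- The split system of the restricted tree `T|X`: two trees agree on
`X` (i.e. `T|X = T'|X`) iff their restricted split systems agree. -/
def restrict (T : PhyloTree n) (X : Finset (Fin n)) : Finset (Finset (Fin n)) :=
  T.sides.image (· ∩ X)

/-- `Γ(T)`: the sum of `|A| * |B|` over all non-trivial splits `A|B` of
`T` (each unordered split is stored twice in `sides`, hence the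
division by two, which is exact). -/
def gamma (T : PhyloTree n) : ℕ :=
  (∑ A ∈ T.sides.filter (fun A => 2 ≤ A.card ∧ 2 ≤ Aᶜ.card), A.card * Aᶜ.card) / 2

/-- A tree-rearrangement move: the deleted edge of `T` (recorded as the
unordered split it induces) together with the output tree. -/
abbrev Move (n : ℕ) := Sym2 (Finset (Fin n)) × PhyloTree n

/-- The set of TBR operations on `T`: delete the edge inducing the
split `A | Aᶜ` and reconnect, obtaining a distinct tree `θ.2`.  The
defining property is that deleting the corresponding edges from `T`
and from `θ.2` yields the same forest, i.e. `A|Aᶜ` is a split of both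
trees and the two restrictions agree. -/
def OTBR (T : PhyloTree n) : Set (Move n) :=
  { θ | θ.2 ≠ T ∧ ∃ A : Finset (Fin n),
      θ.1 = Sym2.mk A Aᶜ ∧ A ∈ T.sides ∧ A ∈ θ.2.sides ∧
      T.restrict A = θ.2.restrict A ∧ T.restrict Aᶜ = θ.2.restrict Aᶜ }

/-- SPR operations: TBR operations where one component `T|A` of the
bisection (the pruned subtree) is regrafted preserving its rooting,
i.e. `T|(A ∪ {x}) = θ(T)|(A ∪ {x})` for some (equivalently every) leaf
`x` of the other side. -/
def OSPR (T : PhyloTree n) : Set (Move n) :=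
  { θ | θ ∈ T.OTBR ∧ ∃ A : Finset (Fin n), θ.1 = Sym2.mk A Aᶜ ∧
      ∃ x ∈ Aᶜ, T.restrict (insert x A) = θ.2.restrict (insert x A) }

/-- The effect on sides of swapping the pendant subtrees `T|Y` and
`T|Z` (for disjoint clusters `Y`, `Z`). -/
def swapSide (Y Z A : Finset (Fin n)) : Finset (Fin n) :=
  if Y ⊆ A ∧ Disjoint Z A then (A \ Y) ∪ Z
  else if Z ⊆ A ∧ Disjoint Y A then (A \ Z) ∪ Y
  else A

/-- NNI operations: SPR operations in which the pruned subtree `T|Y` is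
swapped with a pendant subtree `T|Z` for some cluster `Z ≠ Y` of `T`. -/
def ONNI (T : PhyloTree n) : Set (Move n) :=
  { θ | θ ∈ T.OTBR ∧ ∃ Y Z : Finset (Fin n),
      θ.1 = Sym2.mk Y Yᶜ ∧
      (∃ x ∈ Yᶜ, T.restrict (insert x Y) = θ.2.restrict (insert x Y)) ∧
      Z ∈ T.sides ∧ Z ≠ Y ∧ Disjoint Y Z ∧
      θ.2.sides = T.sides.image (swapSide Y Z) }

/-- The TBR neighbourhood `N_TBR(T) = {θ(T) : θ ∈ O_TBR(T)}`. -/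
def NTBR (T : PhyloTree n) : Set (PhyloTree n) := Prod.snd '' T.OTBR

/-- The SPR neighbourhood. -/
def NSPR (T : PhyloTree n) : Set (PhyloTree n) := Prod.snd '' T.OSPR

/-- The NNI neighbourhood. -/
def NNNI (T : PhyloTree n) : Set (PhyloTree n) := Prod.snd '' T.ONNI

/-- A caterpillar: every internal vertex (equivalently, every
tripartition of the leaves into three clusters) is adjacent to a
leaf. -/
def IsCaterpillar (T : PhyloTree n) : Prop :=
  ∀ A B C : Finset (Fin n), A ∈ T.sides → B ∈ T.sides → C ∈ T.sides →
    Disjoint A B → Disjoint A C → Disjoint B C → A ∪ B ∪ C = Finset.univ →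
    (A.card = 1 ∨ B.card = 1 ∨ C.card = 1)

/-- A complete (maximally balanced) tree. -/
def IsComplete (T : PhyloTree n) : Prop :=
  ∃ k : ℕ, 3 * 2 ^ k ≤ n ∧ n < 3 * 2 ^ (k + 1) ∧
    (∃ Y ∈ T.sides, Y.card = 2 ^ (k + 1)) ∧
    ∀ Y ∈ T.sides, 2 ≤ Y.card → Y.card ≤ 2 ^ (k + 1) →
      ∃ Y₁ Y₂ : Finset (Fin n), Y₁ ∈ T.sides ∧ Y₂ ∈ T.sides ∧
        Disjoint Y₁ Y₂ ∧ Y₁ ∪ Y₂ = Y ∧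
        ∃ j : ℕ, Y₁.card = 2 ^ j ∧ 2 ^ (j - 1) ≤ Y₂.card ∧ Y₂.card < 2 ^ (j + 1)

/-- The pendant subtree on the cluster `S` is perfectly balanced:
every cluster inside `S` with at least two leaves splits into two
equal-sized child clusters. -/
def PerfOn (T : PhyloTree n) (S : Finset (Fin n)) : Prop :=
  ∀ Y ∈ T.sides, Y ⊆ S → 2 ≤ Y.card →
    ∃ Y₁ Y₂ : Finset (Fin n), Y₁ ∈ T.sides ∧ Y₂ ∈ T.sides ∧
      Disjoint Y₁ Y₂ ∧ Y₁ ∪ Y₂ = Y ∧ Y₁.card = Y₂.card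

/-- A perfect tree: either `n = 2^k` and `T` is two perfectly balanced
rooted trees with `2^(k-1)` leaves joined by an edge, or
`n = 3·2^(k-1)` and `T` is three perfectly balanced rooted trees with
`2^(k-1)` leaves attached to a common vertex. -/
def IsPerfect (T : PhyloTree n) : Prop :=
  (∃ k : ℕ, n = 2 ^ k ∧ ∃ A ∈ T.sides,
      A.card = 2 ^ (k - 1) ∧ T.PerfOn A ∧ T.PerfOn Aᶜ) ∨
  (∃ k : ℕ, n = 3 * 2 ^ (k - 1) ∧ ∃ A B C : Finset (Fin n),
      A ∈ T.sides ∧ B ∈ T.sides ∧ C ∈ T.sides ∧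
      Disjoint A B ∧ Disjoint A C ∧ Disjoint B C ∧
      A ∪ B ∪ C = Finset.univ ∧
      A.card = 2 ^ (k - 1) ∧ B.card = 2 ^ (k - 1) ∧ C.card = 2 ^ (k - 1) ∧
      T.PerfOn A ∧ T.PerfOn B ∧ T.PerfOn C)

open Finset

lemma sides_inj {T₁ T₂ : PhyloTree n} (h : T₁.sides = T₂.sides) : T₁ = T₂ := by
  cases T₁; cases T₂; simpa using h

lemma mem_nonempty {T : PhyloTree n} {A : Finset (Fin n)} (h : A ∈ T.sides) : A.Nonempty :=
  (T.proper A h).1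

lemma mem_ne_univ {T : PhyloTree n} {A : Finset (Fin n)} (h : A ∈ T.sides) :
    A ≠ Finset.univ := (T.proper A h).2

lemma swapSide_left {W V A : Finset (Fin n)} (h1 : W ⊆ A) (h2 : Disjoint V A) :
    swapSide W V A = (A \ W) ∪ V := by
  rw [swapSide, if_pos ⟨h1, h2⟩]

lemma swapSide_right {W V A : Finset (Fin n)} (hV : V.Nonempty) (h1 : V ⊆ A)
    (h2 : Disjoint W A) : swapSide W V A = (A \ V) ∪ W := by
  rw [swapSide, if_neg, if_pos ⟨h1, h2⟩]
  rintro ⟨-, hdV⟩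
  exact hV.ne_empty (Finset.eq_empty_of_forall_notMem
    fun a ha => Finset.disjoint_left.mp hdV ha (h1 ha))

lemma swapSide_neither {W V A : Finset (Fin n)} (h1 : ¬(W ⊆ A ∧ Disjoint V A))
    (h2 : ¬(V ⊆ A ∧ Disjoint W A)) : swapSide W V A = A := by
  rw [swapSide, if_neg h1, if_neg h2]


lemma swapSide_invol {W V : Finset (Fin n)} (hW : W.Nonempty) (hV : V.Nonempty)
    (hd : Disjoint W V) (A : Finset (Fin n)) : swapSide W V (swapSide W V A) = A := by
  have hWV : ∀ a, a ∈ W → a ∉ V := fun a ha => Finset.disjoint_left.mp hd ha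
  by_cases hb1 : W ⊆ A ∧ Disjoint V A
  · rw [swapSide_left hb1.1 hb1.2,
      swapSide_right hV subset_union_right
        (by rw [Finset.disjoint_union_right]; exact ⟨Finset.disjoint_sdiff, hd⟩)]
    have h1 : ∀ a, a ∈ W → a ∈ A := fun a ha => hb1.1 ha
    have h2 : ∀ a, a ∈ V → a ∉ A := fun a ha => Finset.disjoint_left.mp hb1.2 ha
    ext a
    simp only [mem_union, mem_sdiff]
    have := h1 a; have := h2 a; have := hWV a
    tauto
  · by_cases hb2 : V ⊆ A ∧ Disjoint W A
    · rw [swapSide_right hV hb2.1 hb2.2,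
        swapSide_left subset_union_right
          (by rw [Finset.disjoint_union_right]; exact ⟨Finset.disjoint_sdiff, hd.symm⟩)]
      have h1 : ∀ a, a ∈ V → a ∈ A := fun a ha => hb2.1 ha
      have h2 : ∀ a, a ∈ W → a ∉ A := fun a ha => Finset.disjoint_left.mp hb2.2 ha
      ext a
      simp only [mem_union, mem_sdiff]
      have := h1 a; have := h2 a; have := hWV a
      tauto
    · rw [swapSide_neither hb1 hb2, swapSide_neither hb1 hb2]

lemma mem_image_swapSide {W V : Finset (Fin n)} (hW : W.Nonempty) (hV : V.Nonempty)
    (hd : Disjoint W V) {s : Finset (Finset (Fin n))} {B : Finset (Fin n)} :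
    B ∈ s.image (swapSide W V) ↔ swapSide W V B ∈ s := by
  constructor
  · intro h
    obtain ⟨C, hC, rfl⟩ := Finset.mem_image.mp h
    rwa [swapSide_invol hW hV hd]
  · intro h
    exact Finset.mem_image.mpr ⟨_, h, swapSide_invol hW hV hd B⟩
/-- If `P ⊂ Q` are sides with no side strictly between them, then `Q \ P` is a side. -/

lemma sdiff_mem {T : PhyloTree n} {P Q : Finset (Fin n)} (hP : P ∈ T.sides)
    (hQ : Q ∈ T.sides) (hPQ : P ⊂ Q)
    (hnb : ∀ B ∈ T.sides, P ⊆ B → B ⊆ Q → B = P ∨ B = Q) :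
    Q \ P ∈ T.sides := by
  have hPne := mem_nonempty hP
  have hQuniv := mem_ne_univ hQ
  obtain ⟨x, hxQ, hxP⟩ := Finset.exists_of_ssubset hPQ
  apply T.maximal
  · exact ⟨x, Finset.mem_sdiff.mpr ⟨hxQ, hxP⟩⟩
  · intro h
    obtain ⟨a, ha⟩ := hPne
    have : a ∈ Q \ P := h ▸ Finset.mem_univ a
    exact (Finset.mem_sdiff.mp this).2 ha
  · intro B hB
    rcases T.compatible B hB Q hQ with hBQ|hQB|hdBQ|huBQ
    · rcases T.compatible B hB P hP with h2|h2|h2|h2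
      · exact Or.inr (Or.inr (Or.inl (Finset.disjoint_left.mpr
          fun a haX haB => (Finset.mem_sdiff.mp haX).2 (h2 haB))))
      · rcases hnb B hB h2 hBQ with rfl|rfl
        · exact Or.inr (Or.inr (Or.inl (Finset.disjoint_left.mpr
            fun a haX haB => (Finset.mem_sdiff.mp haX).2 haB)))
        · exact Or.inl Finset.sdiff_subset
      · exact Or.inr (Or.inl (fun a haB => Finset.mem_sdiff.mpr
          ⟨hBQ haB, fun haP => Finset.disjoint_left.mp h2 haB haP⟩))
      · exact absurd (Finset.eq_univ_iff_forall.mpr fun a => by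
          rcases Finset.mem_union.mp (h2 ▸ Finset.mem_univ a) with h|h
          exacts [hBQ h, hPQ.1 h]) hQuniv
    · exact Or.inl (fun a haX => hQB (Finset.mem_sdiff.mp haX).1)
    · exact Or.inr (Or.inr (Or.inl (Finset.disjoint_left.mpr
        fun a haX haB => Finset.disjoint_left.mp hdBQ haB (Finset.mem_sdiff.mp haX).1)))
    · have hu : ∀ a : Fin n, a ∉ B → a ∈ Q := fun a ha => by
        rcases Finset.mem_union.mp (huBQ ▸ Finset.mem_univ a) with h|h
        exacts [absurd h ha, h]
      rcases T.compatible B hB P hP with h2|h2|h2|h2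
      · exact absurd (Finset.eq_univ_iff_forall.mpr fun a => by
          by_cases haB : a ∈ B
          · exact hPQ.1 (h2 haB)
          · exact hu a haB) hQuniv
      · refine Or.inr (Or.inr (Or.inr (Finset.eq_univ_iff_forall.mpr fun a => ?_)))
        by_cases haB : a ∈ B
        · exact Finset.mem_union.mpr (Or.inr haB)
        · exact Finset.mem_union.mpr (Or.inl (Finset.mem_sdiff.mpr
            ⟨hu a haB, fun haP => haB (h2 haP)⟩))
      · have hBc := T.compl_mem B hB
        have hsub1 : P ⊆ Bᶜ := fun a haP => Finset.mem_compl.mpr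
          (fun haB => Finset.disjoint_left.mp h2 haB haP)
        have hsub2 : Bᶜ ⊆ Q := fun a ha => hu a (Finset.mem_compl.mp ha)
        rcases hnb Bᶜ hBc hsub1 hsub2 with hc|hc
        · exact Or.inl (fun a haX => by
            by_contra haB
            exact (Finset.mem_sdiff.mp haX).2 (hc ▸ Finset.mem_compl.mpr haB))
        · refine Or.inr (Or.inr (Or.inl (Finset.disjoint_left.mpr fun a haX haB => ?_)))
          have hq : a ∈ Bᶜ := by rw [hc]; exact (Finset.mem_sdiff.mp haX).1
          exact Finset.mem_compl.mp hq haB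
      · have hu2 : ∀ a : Fin n, a ∉ B → a ∈ P := fun a ha => by
          rcases Finset.mem_union.mp (h2 ▸ Finset.mem_univ a) with h|h
          exacts [absurd h ha, h]
        exact Or.inl (fun a haX => by
          by_contra haB
          exact (Finset.mem_sdiff.mp haX).2 (hu2 a haB))

/-- Classification of the sides between `P` and `Rᶜ` for a "quartet" partition
`P, Q, R, S` of the leaves in which `P ∪ S` is not a side. -/

lemma chain_classify {T : PhyloTree n} {P Q R S : Finset (Fin n)}
    (hQ : Q ∈ T.sides) (hS : S ∈ T.sides)
    (hPQ : Disjoint P Q) (hPS : Disjoint P S) (hQR : Disjoint Q R)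
    (hQS : Disjoint Q S) (hRS : Disjoint R S)
    (hPne : P.Nonempty) (hRne : R.Nonempty)
    (huniv : ∀ a : Fin n, a ∈ P ∨ a ∈ Q ∨ a ∈ S ∨ a ∈ R)
    (hPSmem : P ∪ S ∉ T.sides) :
    ∀ B ∈ T.sides, P ⊆ B → Disjoint R B → B = P ∨ B = P ∪ Q ∨ B = Rᶜ := by
  intro B hB hPB hRB
  have hBsub : ∀ a, a ∈ B → a ∈ P ∨ a ∈ Q ∨ a ∈ S := by
    intro a haB
    rcases huniv a with h|h|h|h
    exacts [Or.inl h, Or.inr (Or.inl h), Or.inr (Or.inr h),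
      absurd haB (Finset.disjoint_left.mp hRB h)]
  have hQB : Q ∩ B = ∅ ∨ Q ⊆ B := by
    rcases T.compatible B hB Q hQ with h|h|h|h
    · obtain ⟨p, hp⟩ := hPne
      exact absurd (h (hPB hp)) (fun hq => Finset.disjoint_left.mp hPQ hp hq)
    · exact Or.inr h
    · exact Or.inl (Finset.eq_empty_of_forall_notMem fun a ha => by
        have := Finset.mem_inter.mp ha
        exact Finset.disjoint_left.mp h this.2 this.1)
    · obtain ⟨r, hr⟩ := hRne
      rcases Finset.mem_union.mp (h ▸ Finset.mem_univ r) with hh|hh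
      · exact absurd hh (Finset.disjoint_left.mp hRB hr)
      · exact absurd hh (fun h' => Finset.disjoint_left.mp hQR h' hr)
  have hSB : S ∩ B = ∅ ∨ S ⊆ B := by
    rcases T.compatible B hB S hS with h|h|h|h
    · obtain ⟨p, hp⟩ := hPne
      exact absurd (h (hPB hp)) (fun hq => Finset.disjoint_left.mp hPS hp hq)
    · exact Or.inr h
    · exact Or.inl (Finset.eq_empty_of_forall_notMem fun a ha => by
        have := Finset.mem_inter.mp ha
        exact Finset.disjoint_left.mp h this.2 this.1)
    · obtain ⟨r, hr⟩ := hRne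
      rcases Finset.mem_union.mp (h ▸ Finset.mem_univ r) with hh|hh
      · exact absurd hh (Finset.disjoint_left.mp hRB hr)
      · exact absurd hh (Finset.disjoint_left.mp hRS hr)
  rcases hQB with hQB|hQB <;> rcases hSB with hSB|hSB
  · -- B = P
    refine Or.inl (Finset.Subset.antisymm (fun a haB => ?_) hPB)
    rcases hBsub a haB with h|h|h
    · exact h
    · exact absurd (Finset.mem_inter.mpr ⟨h, haB⟩) (by simp [hQB])
    · exact absurd (Finset.mem_inter.mpr ⟨h, haB⟩) (by simp [hSB])
  · -- Q ∩ B = ∅, S ⊆ B : B = P ∪ S, contradiction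
    exact absurd (by
      have : B = P ∪ S := Finset.Subset.antisymm (fun a haB => by
        rcases hBsub a haB with h|h|h
        · exact Finset.mem_union.mpr (Or.inl h)
        · exact absurd (Finset.mem_inter.mpr ⟨h, haB⟩) (by simp [hQB])
        · exact Finset.mem_union.mpr (Or.inr h))
        (Finset.union_subset hPB hSB)
      exact this ▸ hB) hPSmem
  · -- Q ⊆ B, S ∩ B = ∅ : B = P ∪ Q
    refine Or.inr (Or.inl (Finset.Subset.antisymm (fun a haB => ?_)
      (Finset.union_subset hPB hQB)))
    rcases hBsub a haB with h|h|h
    · exact Finset.mem_union.mpr (Or.inl h)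
    · exact Finset.mem_union.mpr (Or.inr h)
    · exact absurd (Finset.mem_inter.mpr ⟨h, haB⟩) (by simp [hSB])
  · -- both : B = Rᶜ
    refine Or.inr (Or.inr (Finset.Subset.antisymm (fun a haB => Finset.mem_compl.mpr
      (fun haR => Finset.disjoint_left.mp hRB haR haB)) (fun a haR => ?_)))
    rcases huniv a with h|h|h|h
    · exact hPB h
    · exact hQB h
    · exact hSB h
    · exact absurd h (Finset.mem_compl.mp haR)

lemma ne_of_disjoint {P Q : Finset (Fin n)} (h : Disjoint P Q) (hP : P.Nonempty) : P ≠ Q := by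
  rintro rfl
  exact hP.ne_empty (by simpa using disjoint_self.mp h)

lemma ne_compl_of {P Q R : Finset (Fin n)} (hR : R.Nonempty) (hRQc : R ⊆ Qᶜ)
    (hRP : Disjoint R P) : P ≠ Qᶜ := by
  rintro rfl
  obtain ⟨a, ha⟩ := hR
  exact Finset.disjoint_left.mp hRP ha (hRQc ha)

lemma compl_swap_id {W V : Finset (Fin n)} (hWV : Disjoint W V) : (Vᶜ \ W) ∪ V = Wᶜ := by
  have h : ∀ a, a ∈ W → a ∉ V := fun a ha => Finset.disjoint_left.mp hWV ha
  ext a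
  simp only [Finset.mem_union, Finset.mem_sdiff, Finset.mem_compl]
  have := h a
  tauto

lemma compl_swap_id' {W V E : Finset (Fin n)} (hWE : W ⊆ E) (hEV : Disjoint E V) :
    (Eᶜ \ V) ∪ W = ((E \ W) ∪ V)ᶜ := by
  have h1 : ∀ a, a ∈ E → a ∉ V := fun a ha => Finset.disjoint_left.mp hEV ha
  have h2 : ∀ a, a ∈ W → a ∈ E := fun a ha => hWE ha
  ext a
  simp only [Finset.mem_union, Finset.mem_sdiff, Finset.mem_compl, not_or, not_and, not_not]
  have := h1 a; have := h2 a
  tauto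

/-- The split system of the tree obtained by swapping the adjacent pendant
subtrees `W` and `V` (around the middle edge `E`). -/
lemma image_swapSide_eq {T : PhyloTree n} {W V E : Finset (Fin n)}
    (hW : W ∈ T.sides) (hV : V ∈ T.sides) (hE : E ∈ T.sides)
    (hd : Disjoint W V) (h1 : W ⊂ E) (h2 : E ⊂ Vᶜ)
    (hchain : ∀ B ∈ T.sides, W ⊆ B → Disjoint V B → B = W ∨ B = E ∨ B = Vᶜ) :
    T.sides.image (swapSide W V) =
      (T.sides \ {E, Eᶜ}) ∪ {(E \ W) ∪ V, ((E \ W) ∪ V)ᶜ} := by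
  have hWne := mem_nonempty hW
  have hVne := mem_nonempty hV
  have hEne := mem_nonempty hE
  have hdVE : Disjoint V E := Finset.disjoint_left.mpr
    (fun a ha hE' => Finset.mem_compl.mp (h2.1 hE') ha)
  have hdWEc : Disjoint W Eᶜ := Finset.disjoint_left.mpr
    (fun a ha hE' => Finset.mem_compl.mp hE' (h1.1 ha))
  have hWVc : W ⊆ Vᶜ := fun a ha => Finset.mem_compl.mpr
    (fun hv => Finset.disjoint_left.mp hd ha hv)
  have hVEc : V ⊆ Eᶜ := fun a ha => Finset.mem_compl.mpr
    (fun hv => Finset.disjoint_left.mp hdVE ha hv)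
  -- the six moved sides
  have gW : swapSide W V W = V := by
    rw [swapSide_left (le_refl _) (Finset.disjoint_left.mpr
      (fun a ha hw => Finset.disjoint_left.mp hd hw ha))]
    simp
  have gV : swapSide W V V = W := by
    rw [swapSide_right hVne (le_refl _) hd]
    simp
  have gE : swapSide W V E = (E \ W) ∪ V := swapSide_left h1.1 hdVE
  have gEc : swapSide W V Eᶜ = ((E \ W) ∪ V)ᶜ := by
    rw [swapSide_right hVne hVEc hdWEc, compl_swap_id' h1.1 hdVE.symm]
  have gVc : swapSide W V Vᶜ = Wᶜ := by
    rw [swapSide_left hWVc disjoint_compl_right, compl_swap_id hd]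
  have gWc : swapSide W V Wᶜ = Vᶜ := by
    rw [swapSide_right hVne (fun a ha => Finset.mem_compl.mpr
      (fun hw => Finset.disjoint_left.mp hd hw ha)) disjoint_compl_right,
      compl_swap_id hd.symm]
  -- inequality facts
  have hVneE : V ≠ E := ne_of_disjoint hdVE hVne
  have hVneEc : V ≠ Eᶜ := by
    intro h
    apply h2.ne
    rw [h, compl_compl]
  have hWneE : W ≠ E := h1.ne
  have hWneEc : W ≠ Eᶜ := ne_of_disjoint hdWEc hWne
  have hWcneE : Wᶜ ≠ E := by
    intro h
    apply hWneEc
    rw [← h, compl_compl]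
  have hWcneEc : Wᶜ ≠ Eᶜ := fun h => hWneE (compl_injective h)
  have hVcneE : Vᶜ ≠ E := h2.ne'
  have hVcneEc : Vᶜ ≠ Eᶜ := fun h => hVneE (compl_injective h)
  ext b
  simp only [Finset.mem_union, Finset.mem_sdiff, Finset.mem_insert, Finset.mem_singleton, not_or]
  constructor
  · intro hb
    obtain ⟨B, hB, rfl⟩ := Finset.mem_image.mp hb
    by_cases hb1 : W ⊆ B ∧ Disjoint V B
    · rcases hchain B hB hb1.1 hb1.2 with rfl|rfl|rfl
      · rw [gW]; exact Or.inl ⟨hV, by simp [hVneE, hVneEc]⟩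
      · rw [gE]; exact Or.inr (Or.inl rfl)
      · rw [gVc]; exact Or.inl ⟨T.compl_mem W hW, by simp [hWcneE, hWcneEc]⟩
    · by_cases hb2 : V ⊆ B ∧ Disjoint W B
      · have hBc := T.compl_mem B hB
        have hWBc : W ⊆ Bᶜ := fun a ha => Finset.mem_compl.mpr
          (fun hb' => Finset.disjoint_left.mp hb2.2 ha hb')
        have hVBc : Disjoint V Bᶜ := Finset.disjoint_left.mpr
          (fun a ha hb' => Finset.mem_compl.mp hb' (hb2.1 ha))
        rcases hchain Bᶜ hBc hWBc hVBc with hc|hc|hc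
        · have : B = Wᶜ := by rw [← hc, compl_compl]
          subst this
          rw [gWc]; exact Or.inl ⟨T.compl_mem V hV, by simp [hVcneE, hVcneEc]⟩
        · have : B = Eᶜ := by rw [← hc, compl_compl]
          subst this
          rw [gEc]; exact Or.inr (Or.inr rfl)
        · have : B = V := by rw [← compl_compl B, hc, compl_compl]
          subst this
          rw [gV]; exact Or.inl ⟨hW, by simp [hWneE, hWneEc]⟩
      · rw [swapSide_neither hb1 hb2]
        refine Or.inl ⟨hB, ?_, ?_⟩
        · rintro rfl; exact hb1 ⟨h1.1, hdVE⟩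
        · rintro rfl; exact hb2 ⟨hVEc, hdWEc⟩
  · intro hb
    rcases hb with ⟨hBs, hne1, hne2⟩|hb|hb
    · rw [mem_image_swapSide hWne hVne hd]
      by_cases hb1 : W ⊆ b ∧ Disjoint V b
      · rcases hchain b hBs hb1.1 hb1.2 with rfl|rfl|rfl
        · rw [gW]; exact hV
        · exact absurd rfl hne1
        · rw [gVc]; exact T.compl_mem W hW
      · by_cases hb2 : V ⊆ b ∧ Disjoint W b
        · have hBc := T.compl_mem b hBs
          have hWBc : W ⊆ bᶜ := fun a ha => Finset.mem_compl.mpr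
            (fun hb' => Finset.disjoint_left.mp hb2.2 ha hb')
          have hVBc : Disjoint V bᶜ := Finset.disjoint_left.mpr
            (fun a ha hb' => Finset.mem_compl.mp hb' (hb2.1 ha))
          rcases hchain bᶜ hBc hWBc hVBc with hc|hc|hc
          · have : b = Wᶜ := by rw [← hc, compl_compl]
            subst this
            rw [gWc]; exact T.compl_mem V hV
          · have : b = Eᶜ := by rw [← hc, compl_compl]
            exact absurd this hne2
          · have : b = V := by rw [← compl_compl b, hc, compl_compl]
            subst this
            rw [gV]; exact hW
        · rw [swapSide_neither hb1 hb2]; exact hBs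
    · exact Finset.mem_image.mpr ⟨E, hE, by rw [gE, hb]⟩
    · exact Finset.mem_image.mpr ⟨Eᶜ, T.compl_mem E hE, by rw [gEc, hb]⟩

lemma subset_compl_of_disjoint {P B : Finset (Fin n)} (h : Disjoint P B) : B ⊆ Pᶜ :=
  fun a ha => Finset.mem_compl.mpr (fun hp => Finset.disjoint_left.mp h hp ha)

lemma disjoint_of_subset_compl {P B : Finset (Fin n)} (h : B ⊆ Pᶜ) : Disjoint P B :=
  Finset.disjoint_left.mpr (fun a ha hb => Finset.mem_compl.mp (h hb) ha)

/-- If two trees are related by a subtree swap and agree outside `W`, there cannot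
be two sides strictly between `W` and `Vᶜ`. -/
lemma no_two_middles {T T' : PhyloTree n} {W V E₁ E₂ : Finset (Fin n)}
    (hW : W ∈ T.sides) (hV : V ∈ T.sides) (hE₁ : E₁ ∈ T.sides) (hE₂ : E₂ ∈ T.sides)
    (hd : Disjoint W V)
    (h1 : W ⊂ E₁) (h2 : E₁ ⊂ E₂) (h3 : E₂ ⊂ Vᶜ)
    (himg : T'.sides = T.sides.image (swapSide W V))
    (hW' : W ∈ T'.sides)
    (hres : T.restrict Wᶜ = T'.restrict Wᶜ) : False := by
  have hWne := mem_nonempty hW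
  have hVne := mem_nonempty hV
  have hWE₂ : W ⊂ E₂ := h1.trans h2
  have hdVE₂ : Disjoint V E₂ := disjoint_of_subset_compl h3.1
  obtain ⟨w0, hw0⟩ := mem_nonempty hW
  obtain ⟨v0, hv0⟩ := mem_nonempty hV
  obtain ⟨e1, he1E, he1W⟩ := Finset.exists_of_ssubset h1
  obtain ⟨e2, he2E, he2E1⟩ := Finset.exists_of_ssubset h2
  obtain ⟨e3, he3V, he3E2⟩ := Finset.exists_of_ssubset h3
  have he1E₂ : e1 ∈ E₂ := h2.1 he1E
  -- (E₂ \ W) ∪ V is not a side of T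
  have hgE₂ : (E₂ \ W) ∪ V ∉ T.sides := by
    intro hmem'
    rcases T.compatible _ hmem' E₁ hE₁ with h|h|h|h
    · have : v0 ∈ E₁ := h (Finset.mem_union.mpr (Or.inr hv0))
      exact Finset.mem_compl.mp (h3.1 (h2.1 this)) hv0
    · have : w0 ∈ (E₂ \ W) ∪ V := h (h1.1 hw0)
      rcases Finset.mem_union.mp this with hh|hh
      · exact (Finset.mem_sdiff.mp hh).2 hw0
      · exact Finset.disjoint_left.mp hd hw0 hh
    · exact Finset.disjoint_left.mp h
        (Finset.mem_union.mpr (Or.inl (Finset.mem_sdiff.mpr ⟨he1E₂, he1W⟩))) he1E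
    · have : e3 ∈ (E₂ \ W) ∪ V ∪ E₁ := h ▸ Finset.mem_univ e3
      rcases Finset.mem_union.mp this with hh|hh
      · rcases Finset.mem_union.mp hh with hh'|hh'
        · exact he3E2 (Finset.mem_sdiff.mp hh').1
        · exact Finset.mem_compl.mp he3V hh'
      · exact he3E2 (h2.1 hh)
  -- E₂ \ W is not a side of T
  have hsdE₂ : E₂ \ W ∉ T.sides := by
    intro hmem'
    rcases T.compatible _ hmem' E₁ hE₁ with h|h|h|h
    · have : e2 ∈ E₁ := h (Finset.mem_sdiff.mpr ⟨he2E, fun hw => he2E1 (h1.1 hw)⟩)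
      exact he2E1 this
    · have : w0 ∈ E₂ \ W := h (h1.1 hw0)
      exact (Finset.mem_sdiff.mp this).2 hw0
    · exact Finset.disjoint_left.mp h (Finset.mem_sdiff.mpr ⟨he1E₂, he1W⟩) he1E
    · have : e3 ∈ E₂ \ W ∪ E₁ := h ▸ Finset.mem_univ e3
      rcases Finset.mem_union.mp this with hh|hh
      · exact he3E2 (Finset.mem_sdiff.mp hh).1
      · exact he3E2 (h2.1 hh)
  -- hence E₂ and E₂ \ W are not sides of T'
  have hE₂s : E₂ ∉ T'.sides := by
    rw [himg, mem_image_swapSide hWne hVne hd, swapSide_left hWE₂.1 hdVE₂]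
    exact hgE₂
  have hE₂Ws : E₂ \ W ∉ T'.sides := by
    rw [himg, mem_image_swapSide hWne hVne hd, swapSide_neither]
    · exact hsdE₂
    · rintro ⟨hsub, -⟩
      exact (Finset.mem_sdiff.mp (hsub hw0)).2 hw0
    · rintro ⟨hsub, -⟩
      have : v0 ∈ E₂ := (Finset.mem_sdiff.mp (hsub hv0)).1
      exact Finset.disjoint_left.mp hdVE₂ hv0 this
  -- restriction argument
  have hmem : E₂ ∩ Wᶜ ∈ T.restrict Wᶜ := Finset.mem_image.mpr ⟨E₂, hE₂, rfl⟩
  rw [hres] at hmem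
  obtain ⟨B', hB', hBeq⟩ := Finset.mem_image.mp hmem
  have hBeq' : B' ∩ Wᶜ = E₂ ∩ Wᶜ := hBeq
  have he2' : e2 ∈ E₂ ∩ Wᶜ := Finset.mem_inter.mpr
    ⟨he2E, Finset.mem_compl.mpr (fun hw => he2E1 (h1.1 hw))⟩
  rcases T'.compatible B' hB' W hW' with h|h|h|h
  · have : e2 ∈ B' := (Finset.mem_inter.mp (hBeq' ▸ he2')).1
    have : e2 ∈ W := h this
    exact he2E1 (h1.1 this)
  · -- W ⊆ B' : B' = E₂
    apply hE₂s
    have : B' = E₂ := by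
      ext a
      by_cases haW : a ∈ W
      · simp [h haW, hWE₂.1 haW]
      · constructor
        · intro haB
          have : a ∈ B' ∩ Wᶜ := Finset.mem_inter.mpr ⟨haB, Finset.mem_compl.mpr haW⟩
          exact (Finset.mem_inter.mp (hBeq' ▸ this)).1
        · intro haE
          have : a ∈ E₂ ∩ Wᶜ := Finset.mem_inter.mpr ⟨haE, Finset.mem_compl.mpr haW⟩
          exact (Finset.mem_inter.mp (hBeq'.symm ▸ this)).1
    exact this ▸ hB'
  · -- Disjoint B' W : B' = E₂ \ W
    apply hE₂Ws
    have : B' = E₂ \ W := by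
      ext a
      constructor
      · intro haB
        have haW : a ∉ W := fun hw => Finset.disjoint_left.mp h haB hw
        have : a ∈ B' ∩ Wᶜ := Finset.mem_inter.mpr ⟨haB, Finset.mem_compl.mpr haW⟩
        exact Finset.mem_sdiff.mpr ⟨(Finset.mem_inter.mp (hBeq' ▸ this)).1, haW⟩
      · intro haE
        obtain ⟨haE₂, haW⟩ := Finset.mem_sdiff.mp haE
        have : a ∈ E₂ ∩ Wᶜ := Finset.mem_inter.mpr ⟨haE₂, Finset.mem_compl.mpr haW⟩
        exact (Finset.mem_inter.mp (hBeq'.symm ▸ this)).1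
    exact this ▸ hB'
  · -- B' ∪ W = univ : then v0 ∈ E₂, contradiction
    have hv0W : v0 ∉ W := fun hw => Finset.disjoint_left.mp hd hw hv0
    have hv0B : v0 ∈ B' := by
      rcases Finset.mem_union.mp (h ▸ Finset.mem_univ v0) with hh|hh
      · exact hh
      · exact absurd hh hv0W
    have : v0 ∈ B' ∩ Wᶜ := Finset.mem_inter.mpr ⟨hv0B, Finset.mem_compl.mpr hv0W⟩
    have : v0 ∈ E₂ := (Finset.mem_inter.mp (hBeq' ▸ this)).1
    exact Finset.mem_compl.mp (h3.1 this) hv0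

/-- Main structural lemma: a subtree swap that satisfies the TBR restriction
condition exhibits `T` and `T'` as NNI neighbours across an edge `E`. -/
lemma main_structure {T T' : PhyloTree n} (hne : T' ≠ T) {W V : Finset (Fin n)}
    (hW : W ∈ T.sides) (hV : V ∈ T.sides) (hd : Disjoint W V)
    (himg : T'.sides = T.sides.image (swapSide W V))
    (hW' : W ∈ T'.sides)
    (hres : T.restrict Wᶜ = T'.restrict Wᶜ) :
    ∃ E ∈ T.sides, W ⊂ E ∧ E ⊂ Vᶜ ∧
      (∀ B ∈ T.sides, W ⊆ B → Disjoint V B → B = W ∨ B = E ∨ B = Vᶜ) ∧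
      E \ W ∈ T.sides ∧ Vᶜ \ E ∈ T.sides ∧
      (E \ W) ∪ V ∉ T.sides ∧
      T'.sides = (T.sides \ {E, Eᶜ}) ∪ {(E \ W) ∪ V, ((E \ W) ∪ V)ᶜ} := by
  have hWne := mem_nonempty hW
  have hVne := mem_nonempty hV
  have hWVc : W ⊆ Vᶜ := subset_compl_of_disjoint hd.symm
  -- Step 1: there is a middle side
  have hmid : ∃ E ∈ T.sides, W ⊂ E ∧ E ⊂ Vᶜ := by
    by_contra hmidn
    push_neg at hmidn
    apply hne
    apply sides_inj
    have key : ∀ B ∈ T.sides, swapSide W V B ∈ T.sides := by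
      intro B hB
      by_cases hb1 : W ⊆ B ∧ Disjoint V B
      · have hBVc : B ⊆ Vᶜ := subset_compl_of_disjoint hb1.2
        rcases eq_or_ne B W with rfl|hne1
        · rw [swapSide_left hb1.1 hb1.2]
          have : (B \ B) ∪ V = V := by simp
          rw [this]; exact hV
        · rcases eq_or_ne B Vᶜ with rfl|hne2
          · rw [swapSide_left hb1.1 hb1.2, compl_swap_id hd]
            exact T.compl_mem W hW
          · exact absurd (lt_of_le_of_ne hBVc hne2)
              (hmidn B hB (lt_of_le_of_ne hb1.1 (Ne.symm hne1)))
      · by_cases hb2 : V ⊆ B ∧ Disjoint W B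
        · have hBc := T.compl_mem B hB
          have hWBc : W ⊆ Bᶜ := subset_compl_of_disjoint hb2.2.symm
          have hVBc : Disjoint V Bᶜ := Finset.disjoint_left.mpr
            (fun a ha hb' => Finset.mem_compl.mp hb' (hb2.1 ha))
          have hBcVc : Bᶜ ⊆ Vᶜ := subset_compl_of_disjoint hVBc
          rcases eq_or_ne Bᶜ W with hc|hne1
          · have : B = Wᶜ := by rw [← hc, compl_compl]
            subst this
            rw [swapSide_right hVne hb2.1 hb2.2, compl_swap_id hd.symm]
            exact T.compl_mem V hV
          · rcases eq_or_ne Bᶜ Vᶜ with hc|hne2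
            · have : B = V := compl_injective hc
              subst this
              rw [swapSide_right hVne hb2.1 hb2.2]
              have : (B \ B) ∪ W = W := by simp
              rw [this]; exact hW
            · exact absurd (lt_of_le_of_ne hBcVc hne2)
                (hmidn Bᶜ hBc (lt_of_le_of_ne hWBc (Ne.symm hne1)))
        · rw [swapSide_neither hb1 hb2]; exact hB
    rw [himg]
    ext b
    constructor
    · intro hb
      obtain ⟨B, hB, rfl⟩ := Finset.mem_image.mp hb
      exact key B hB
    · intro hb
      rw [mem_image_swapSide hWne hVne hd]
      exact key b hb
  obtain ⟨E, hE, hWE, hEVc⟩ := hmid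
  have hdVE : Disjoint V E := disjoint_of_subset_compl hEVc.1
  -- Step 2: the middle is unique
  have huniq : ∀ B ∈ T.sides, W ⊆ B → Disjoint V B → B = W ∨ B = E ∨ B = Vᶜ := by
    intro B hB hWB hVB
    by_contra hcon
    push_neg at hcon
    obtain ⟨hBW, hBE, hBVc⟩ := hcon
    have hBVc' : B ⊆ Vᶜ := subset_compl_of_disjoint hVB
    have hWBlt : W ⊂ B := lt_of_le_of_ne hWB (Ne.symm hBW)
    have hBVclt : B ⊂ Vᶜ := lt_of_le_of_ne hBVc' hBVc
    rcases T.compatible B hB E hE with h|h|h|h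
    · exact no_two_middles hW hV hB hE hd hWBlt (lt_of_le_of_ne h hBE) hEVc himg hW' hres
    · exact no_two_middles hW hV hE hB hd hWE
        (lt_of_le_of_ne h (fun hh => hBE hh.symm)) hBVclt himg hW' hres
    · obtain ⟨w0, hw0⟩ := hWne
      exact Finset.disjoint_left.mp h (hWB hw0) (hWE.1 hw0)
    · obtain ⟨v0, hv0⟩ := hVne
      rcases Finset.mem_union.mp (h ▸ Finset.mem_univ v0) with hh|hh
      · exact Finset.disjoint_left.mp hVB hv0 hh
      · exact Finset.disjoint_left.mp hdVE hv0 hh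
  -- Step 3: the two siblings are sides
  have hA : E \ W ∈ T.sides := by
    apply sdiff_mem hW hE hWE
    intro B hB h1 h2
    have : Disjoint V B := disjoint_of_subset_compl (h2.trans hEVc.1)
    rcases huniq B hB h1 this with h|h|h
    · exact Or.inl h
    · exact Or.inr h
    · exfalso
      exact hEVc.ne (Finset.Subset.antisymm hEVc.1 (h ▸ h2))
  have hD : Vᶜ \ E ∈ T.sides := by
    have hEc := T.compl_mem E hE
    have hVEc : V ⊂ Eᶜ := by
      refine lt_of_le_of_ne (subset_compl_of_disjoint hdVE.symm) ?_
      intro h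
      apply hEVc.ne
      rw [h, compl_compl]
    have hnb : ∀ B ∈ T.sides, V ⊆ B → B ⊆ Eᶜ → B = V ∨ B = Eᶜ := by
      intro B hB h1 h2
      have hBc := T.compl_mem B hB
      have hEBc : E ⊆ Bᶜ := fun a ha => Finset.mem_compl.mpr
        (fun hb => Finset.mem_compl.mp (h2 hb) ha)
      have hWBc : W ⊆ Bᶜ := hWE.1.trans hEBc
      have hVBc : Disjoint V Bᶜ := Finset.disjoint_left.mpr
        (fun a ha hb => Finset.mem_compl.mp hb (h1 ha))
      rcases huniq Bᶜ hBc hWBc hVBc with h|h|h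
      · exfalso
        exact hWE.ne (Finset.Subset.antisymm hWE.1 (h ▸ hEBc))
      · right
        rw [← compl_compl B, h]
      · left
        exact compl_injective h
    have hsd := sdiff_mem hV hEc hVEc hnb
    have hid : Eᶜ \ V = Vᶜ \ E := by
      ext a
      simp only [Finset.mem_sdiff, Finset.mem_compl]
      tauto
    rwa [hid] at hsd
  have hX : (E \ W) ∪ V ∉ T.sides := by
    obtain ⟨v0, hv0⟩ := mem_nonempty hV
    obtain ⟨w0, hw0⟩ := mem_nonempty hW
    obtain ⟨e1, he1E, he1W⟩ := Finset.exists_of_ssubset hWE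
    obtain ⟨e3, he3V, he3E⟩ := Finset.exists_of_ssubset hEVc
    intro hmem
    rcases T.compatible _ hmem E hE with h|h|h|h
    · exact Finset.disjoint_left.mp hdVE hv0 (h (Finset.mem_union.mpr (Or.inr hv0)))
    · rcases Finset.mem_union.mp (h (hWE.1 hw0)) with hh|hh
      · exact (Finset.mem_sdiff.mp hh).2 hw0
      · exact Finset.disjoint_left.mp hd hw0 hh
    · exact Finset.disjoint_left.mp h
        (Finset.mem_union.mpr (Or.inl (Finset.mem_sdiff.mpr ⟨he1E, he1W⟩))) he1E
    · have : e3 ∈ (E \ W) ∪ V ∪ E := h ▸ Finset.mem_univ e3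
      rcases Finset.mem_union.mp this with hh|hh
      · rcases Finset.mem_union.mp hh with hh'|hh'
        · exact he3E (Finset.mem_sdiff.mp hh').1
        · exact Finset.mem_compl.mp he3V hh'
      · exact he3E hh
  have hform := image_swapSide_eq hW hV hE hd hWE hEVc huniq
  exact ⟨E, hE, hWE, hEVc, huniq, hA, hD, hX, by rw [himg]; exact hform⟩

lemma mem_of_form {T T' : PhyloTree n} {E X B : Finset (Fin n)}
    (hform : T'.sides = (T.sides \ {E, Eᶜ}) ∪ {X, Xᶜ})
    (hB : B ∈ T.sides) (h1 : B ≠ E) (h2 : B ≠ Eᶜ) : B ∈ T'.sides := by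
  rw [hform]
  exact Finset.mem_union.mpr (Or.inl (Finset.mem_sdiff.mpr ⟨hB, by simp [h1, h2]⟩))

lemma restrict_eq_of_form {T T' : PhyloTree n} {E X : Finset (Fin n)}
    (hform : T'.sides = (T.sides \ {E, Eᶜ}) ∪ {X, Xᶜ}) (S : Finset (Fin n))
    (h1 : ∃ B ∈ T'.sides, B ∩ S = E ∩ S) (h2 : ∃ B ∈ T'.sides, B ∩ S = Eᶜ ∩ S)
    (h3 : ∃ B ∈ T.sides, B ∩ S = X ∩ S) (h4 : ∃ B ∈ T.sides, B ∩ S = Xᶜ ∩ S) :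
    T.restrict S = T'.restrict S := by
  unfold restrict
  ext b
  simp only [Finset.mem_image]
  constructor
  · rintro ⟨B, hB, rfl⟩
    rcases eq_or_ne B E with rfl|hne1
    · obtain ⟨B', hB', hB'eq⟩ := h1
      exact ⟨B', hB', hB'eq⟩
    rcases eq_or_ne B Eᶜ with rfl|hne2
    · obtain ⟨B', hB', hB'eq⟩ := h2
      exact ⟨B', hB', hB'eq⟩
    exact ⟨B, mem_of_form hform hB hne1 hne2, rfl⟩
  · rintro ⟨B, hB, rfl⟩
    rw [hform] at hB
    rcases Finset.mem_union.mp hB with h|h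
    · exact ⟨B, (Finset.mem_sdiff.mp h).1, rfl⟩
    · rcases Finset.mem_insert.mp h with rfl|h'
      · obtain ⟨B', hB', e⟩ := h3
        exact ⟨B', hB', e⟩
      · rw [Finset.mem_singleton.mp h']
        obtain ⟨B', hB', e⟩ := h4
        exact ⟨B', hB', e⟩

lemma form_unique {s : Finset (Finset (Fin n))} {E X E' X' : Finset (Fin n)}
    (hE' : E' ∈ s)
    (hX : X ∉ s) (hXc : Xᶜ ∉ s) (hX' : X' ∉ s) (hX'c : X'ᶜ ∉ s)
    (heq : (s \ {E, Eᶜ}) ∪ {X, Xᶜ} = (s \ {E', E'ᶜ}) ∪ {X', X'ᶜ}) :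
    (E' = E ∨ E' = Eᶜ) ∧ (X' = X ∨ X' = Xᶜ) := by
  constructor
  · by_contra hcon
    push_neg at hcon
    have hmem : E' ∈ (s \ {E, Eᶜ}) ∪ {X, Xᶜ} :=
      Finset.mem_union.mpr (Or.inl (Finset.mem_sdiff.mpr ⟨hE', by simp [hcon.1, hcon.2]⟩))
    rw [heq] at hmem
    rcases Finset.mem_union.mp hmem with h|h
    · have := (Finset.mem_sdiff.mp h).2
      simp at this
    · rcases Finset.mem_insert.mp h with rfl|h'
      · exact hX' hE'
      · rw [Finset.mem_singleton.mp h'] at hE'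
        exact hX'c hE'
  · have hmem : X' ∈ (s \ {E', E'ᶜ}) ∪ {X', X'ᶜ} :=
      Finset.mem_union.mpr (Or.inr (Finset.mem_insert_self _ _))
    rw [← heq] at hmem
    rcases Finset.mem_union.mp hmem with h|h
    · exact absurd ((Finset.mem_sdiff.mp h).1) hX'
    · rcases Finset.mem_insert.mp h with h'|h'
      · exact Or.inl h'
      · exact Or.inr (Finset.mem_singleton.mp h')
set_option maxHeartbeats 2000000 in
/-- Each of the four "quartet" swaps is an NNI operation producing `T'`. -/
lemma quartet_move_mem {T T' : PhyloTree n} {W M V N : Finset (Fin n)}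
    (hW : W ∈ T.sides) (hM : M ∈ T.sides) (hV : V ∈ T.sides) (hN : N ∈ T.sides)
    (hWM : Disjoint W M) (hWV : Disjoint W V) (hWN : Disjoint W N)
    (hMV : Disjoint M V) (hMN : Disjoint M N) (hVN : Disjoint V N)
    (huniv : ∀ a : Fin n, a ∈ W ∨ a ∈ M ∨ a ∈ V ∨ a ∈ N)
    (hE : W ∪ M ∈ T.sides)
    (hP : M ∪ V ∉ T.sides)
    (hform : T'.sides = (T.sides \ {W ∪ M, (W ∪ M)ᶜ}) ∪ {M ∪ V, (M ∪ V)ᶜ}) :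
    (Sym2.mk W Wᶜ, T') ∈ T.ONNI := by
  have hWne := mem_nonempty hW
  have hMne := mem_nonempty hM
  have hVne := mem_nonempty hV
  have hNne := mem_nonempty hN
  obtain ⟨w0, hw0⟩ := mem_nonempty hW
  obtain ⟨m0, hm0⟩ := mem_nonempty hM
  obtain ⟨v0, hv0⟩ := mem_nonempty hV
  obtain ⟨x, hx⟩ := mem_nonempty hN
  have dWM : ∀ a, a ∈ W → a ∉ M := fun a ha => Finset.disjoint_left.mp hWM ha
  have dWV : ∀ a, a ∈ W → a ∉ V := fun a ha => Finset.disjoint_left.mp hWV ha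
  have dWN : ∀ a, a ∈ W → a ∉ N := fun a ha => Finset.disjoint_left.mp hWN ha
  have dMV : ∀ a, a ∈ M → a ∉ V := fun a ha => Finset.disjoint_left.mp hMV ha
  have dMN : ∀ a, a ∈ M → a ∉ N := fun a ha => Finset.disjoint_left.mp hMN ha
  have dVN : ∀ a, a ∈ V → a ∉ N := fun a ha => Finset.disjoint_left.mp hVN ha
  have hxW : x ∉ W := fun h => dWN x h hx
  have hxM : x ∉ M := fun h => dMN x h hx
  have hxV : x ∉ V := fun h => dVN x h hx
  -- basic inequalities
  have hWneE : W ≠ W ∪ M := by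
    intro h
    exact dWM m0 (by rw [h]; exact Finset.mem_union.mpr (Or.inr hm0)) hm0
  have hWneEc : W ≠ (W ∪ M)ᶜ := by
    intro h
    have : w0 ∈ (W ∪ M)ᶜ := by rw [← h]; exact hw0
    exact Finset.mem_compl.mp this (Finset.mem_union.mpr (Or.inl hw0))
  have hVneE : V ≠ W ∪ M := by
    intro h
    have : v0 ∈ W ∪ M := by rw [← h]; exact hv0
    rcases Finset.mem_union.mp this with hh|hh
    exacts [dWV v0 hh hv0, dMV v0 hh hv0]
  have hVneEc : V ≠ (W ∪ M)ᶜ := by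
    intro h
    have : x ∈ V := by
      rw [h]
      exact Finset.mem_compl.mpr (fun hh => by
        rcases Finset.mem_union.mp hh with h'|h'
        exacts [hxW h', hxM h'])
    exact hxV this
  have hMneE : M ≠ W ∪ M := by
    intro h
    exact dWM w0 hw0 (by rw [h]; exact Finset.mem_union.mpr (Or.inl hw0))
  have hMneEc : M ≠ (W ∪ M)ᶜ := by
    intro h
    have : m0 ∈ (W ∪ M)ᶜ := by rw [← h]; exact hm0
    exact Finset.mem_compl.mp this (Finset.mem_union.mpr (Or.inr hm0))
  have hMcneE : Mᶜ ≠ W ∪ M := by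
    intro h
    have : v0 ∈ Mᶜ := Finset.mem_compl.mpr (fun hh => dMV v0 hh hv0)
    rw [h] at this
    rcases Finset.mem_union.mp this with hh|hh
    exacts [dWV v0 hh hv0, dMV v0 hh hv0]
  have hMcneEc : Mᶜ ≠ (W ∪ M)ᶜ := fun h => hMneE (compl_injective h)
  have hxneE : ({x} : Finset (Fin n)) ≠ W ∪ M := by
    intro h
    have h1 : w0 ∈ ({x} : Finset (Fin n)) := by rw [h]; exact Finset.mem_union.mpr (Or.inl hw0)
    have h2 : m0 ∈ ({x} : Finset (Fin n)) := by rw [h]; exact Finset.mem_union.mpr (Or.inr hm0)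
    rw [Finset.mem_singleton] at h1 h2
    exact dWM w0 hw0 (by rw [h1, ← h2]; exact hm0)
  have hxneEc : ({x} : Finset (Fin n)) ≠ (W ∪ M)ᶜ := by
    intro h
    have h1 : v0 ∈ (W ∪ M)ᶜ := Finset.mem_compl.mpr (fun hh => by
      rcases Finset.mem_union.mp hh with h'|h'
      exacts [dWV v0 h' hv0, dMV v0 h' hv0])
    rw [← h, Finset.mem_singleton] at h1
    exact hxV (by rw [← h1]; exact hv0)
  -- memberships in T'
  have mW' : W ∈ T'.sides := mem_of_form hform hW hWneE hWneEc
  have mV' : V ∈ T'.sides := mem_of_form hform hV hVneE hVneEc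
  have mM' : M ∈ T'.sides := mem_of_form hform hM hMneE hMneEc
  have mMc' : Mᶜ ∈ T'.sides := mem_of_form hform (T.compl_mem M hM) hMcneE hMcneEc
  have mx' : ({x} : Finset (Fin n)) ∈ T'.sides :=
    mem_of_form hform (T.singleton_mem x) hxneE hxneEc
  -- T' ≠ T
  have hEnot : W ∪ M ∉ T'.sides := by
    rw [hform]
    intro h
    rcases Finset.mem_union.mp h with h|h
    · have := (Finset.mem_sdiff.mp h).2
      simp at this
    · rcases Finset.mem_insert.mp h with h'|h'
      · have : w0 ∈ M ∪ V := by rw [← h']; exact Finset.mem_union.mpr (Or.inl hw0)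
        rcases Finset.mem_union.mp this with hh|hh
        exacts [dWM w0 hw0 hh, dWV w0 hw0 hh]
      · rw [Finset.mem_singleton] at h'
        have : m0 ∈ (M ∪ V)ᶜ := by rw [← h']; exact Finset.mem_union.mpr (Or.inr hm0)
        exact Finset.mem_compl.mp this (Finset.mem_union.mpr (Or.inl hm0))
  have hT'ne : T' ≠ T := by
    intro h
    rw [h] at hEnot
    exact hEnot hE
  -- the three restriction equalities
  have resW : T.restrict W = T'.restrict W := by
    refine restrict_eq_of_form hform W ⟨W, mW', ?_⟩ ⟨V, mV', ?_⟩ ⟨M, hM, ?_⟩ ⟨W, hW, ?_⟩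
    · ext a
      simp only [Finset.mem_inter, Finset.mem_union, Finset.mem_compl]
      tauto
    · ext a
      simp only [Finset.mem_inter, Finset.mem_union, Finset.mem_compl]
      have := dWV a
      tauto
    · ext a
      simp only [Finset.mem_inter, Finset.mem_union, Finset.mem_compl]
      have := dWM a; have := dWV a
      tauto
    · ext a
      simp only [Finset.mem_inter, Finset.mem_union, Finset.mem_compl]
      have := dWM a; have := dWV a
      tauto
  have resWc : T.restrict Wᶜ = T'.restrict Wᶜ := by
    refine restrict_eq_of_form hform Wᶜ ⟨M, mM', ?_⟩ ⟨Mᶜ, mMc', ?_⟩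
      ⟨Nᶜ, T.compl_mem N hN, ?_⟩ ⟨N, hN, ?_⟩
    · ext a
      simp only [Finset.mem_inter, Finset.mem_union, Finset.mem_compl]
      have := dWM a
      tauto
    · ext a
      simp only [Finset.mem_inter, Finset.mem_union, Finset.mem_compl]
      tauto
    · ext a
      simp only [Finset.mem_inter, Finset.mem_union, Finset.mem_compl]
      have := huniv a; have := dMN a; have := dVN a
      tauto
    · ext a
      simp only [Finset.mem_inter, Finset.mem_union, Finset.mem_compl]
      have := huniv a; have := dMN a; have := dVN a
      tauto
  have resIns : T.restrict (insert x W) = T'.restrict (insert x W) := by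
    refine restrict_eq_of_form hform (insert x W) ⟨W, mW', ?_⟩ ⟨{x}, mx', ?_⟩
      ⟨M, hM, ?_⟩ ⟨Vᶜ, T.compl_mem V hV, ?_⟩
    · ext a
      simp only [Finset.mem_inter, Finset.mem_union, Finset.mem_compl,
        Finset.mem_insert, Finset.mem_singleton]
      rcases eq_or_ne a x with rfl|hax
      · tauto
      · have := dWM a
        tauto
    · ext a
      simp only [Finset.mem_inter, Finset.mem_union, Finset.mem_compl,
        Finset.mem_insert, Finset.mem_singleton]
      rcases eq_or_ne a x with rfl|hax
      · tauto
      · tauto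
    · ext a
      simp only [Finset.mem_inter, Finset.mem_union, Finset.mem_compl,
        Finset.mem_insert, Finset.mem_singleton]
      rcases eq_or_ne a x with rfl|hax
      · tauto
      · have := dWM a; have := dWV a
        tauto
    · ext a
      simp only [Finset.mem_inter, Finset.mem_union, Finset.mem_compl,
        Finset.mem_insert, Finset.mem_singleton]
      rcases eq_or_ne a x with rfl|hax
      · tauto
      · have := dWM a
        tauto
  -- the swap image
  have hdVE : Disjoint V (W ∪ M) := by
    rw [Finset.disjoint_union_right]
    exact ⟨hWV.symm, hMV.symm⟩
  have hWltE : W ⊂ W ∪ M := lt_of_le_of_ne Finset.subset_union_left hWneE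
  have hEltVc : W ∪ M ⊂ Vᶜ := by
    refine lt_of_le_of_ne (subset_compl_of_disjoint hdVE) ?_
    intro h
    have : x ∈ W ∪ M := by
      rw [h]; exact Finset.mem_compl.mpr hxV
    rcases Finset.mem_union.mp this with hh|hh
    exacts [hxW hh, hxM hh]
  have hWNnot : W ∪ N ∉ T.sides := by
    intro h
    apply hP
    have hid : (W ∪ N)ᶜ = M ∪ V := by
      ext a
      simp only [Finset.mem_union, Finset.mem_compl]
      have := huniv a; have := dWM a; have := dWV a; have := dMN a; have := dVN a
      tauto
    rw [← hid]
    exact T.compl_mem _ h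
  have huniv' : ∀ a : Fin n, a ∈ W ∨ a ∈ M ∨ a ∈ N ∨ a ∈ V := by
    intro a
    have := huniv a
    tauto
  have hchain := chain_classify hM hN hWM hWN hMV hMN hVN hWne hVne huniv' hWNnot
  have himg : T'.sides = T.sides.image (swapSide W V) := by
    rw [image_swapSide_eq hW hV hE hWV hWltE hEltVc hchain, hform]
    have hid : (W ∪ M) \ W = M := by
      ext a
      simp only [Finset.mem_sdiff, Finset.mem_union]
      have := dWM a
      tauto
    rw [hid]
  -- assemble
  refine ⟨⟨hT'ne, W, rfl, hW, mW', resW, resWc⟩, W, V, rfl,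
    ⟨x, Finset.mem_compl.mpr hxW, resIns⟩, hV, ne_of_disjoint hWV.symm hVne, hWV, himg⟩

lemma otbr_extract {T : PhyloTree n} {θ : Move n} (h : θ ∈ T.OTBR) {W : Finset (Fin n)}
    (hσ : θ.1 = Sym2.mk W Wᶜ) :
    W ∈ T.sides ∧ W ∈ θ.2.sides ∧ T.restrict W = θ.2.restrict W ∧
      T.restrict Wᶜ = θ.2.restrict Wᶜ := by
  obtain ⟨-, A₁, hσ₁, h1, h2, h3, h4⟩ := h
  have heq := hσ₁.symm.trans hσ
  rcases Sym2.eq_iff.mp heq with ⟨rfl, -⟩|⟨h5, h6⟩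
  · exact ⟨h1, h2, h3, h4⟩
  · subst h5
    rw [compl_compl] at h4
    have hW1 : W ∈ T.sides := by
      have := T.compl_mem _ h1
      rwa [compl_compl] at this
    have hW2 : W ∈ θ.2.sides := by
      have := θ.2.compl_mem _ h2
      rwa [compl_compl] at this
    exact ⟨hW1, hW2, h4, h3⟩

lemma sym2_ne {P Q : Finset (Fin n)} (h1 : P ≠ Q) (h2 : P ≠ Qᶜ) :
    Sym2.mk P Pᶜ ≠ Sym2.mk Q Qᶜ := by
  intro h
  rcases Sym2.eq_iff.mp h with ⟨h', -⟩|⟨h', -⟩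
  exacts [h1 h', h2 h']
end PhyloTree

set_option maxHeartbeats 2000000 in
/-- if `θ` is an NNI operation on `T ∈ 𝒯_n` (`n ≥ 4`), then
there are precisely four distinct `θ' ∈ O_NNI(T)` with `θ'(T) = θ(T)`. -/
theorem nni_four_redundant_ops (n : ℕ) (hn : 4 ≤ n)
    (T : PhyloTree n) (θ : PhyloTree.Move n) (hθ : θ ∈ T.ONNI) :
    {θ' ∈ T.ONNI | θ'.2 = θ.2}.ncard = 4 := by
  classical
  obtain ⟨hOTBR, Y, Z, hσ, hins, hZ, hZY, hdYZ, himg⟩ := hθ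
  have hne2 : θ.2 ≠ T := hOTBR.1
  obtain ⟨hY, hY', hresY, hresYc⟩ := PhyloTree.otbr_extract hOTBR hσ
  obtain ⟨E, hE, hYE, hEZc, huniq, hA, hD, hX, hform⟩ :=
    PhyloTree.main_structure hne2 hY hZ hdYZ himg hY' hresYc
  have hYne := PhyloTree.mem_nonempty hY
  have hZne := PhyloTree.mem_nonempty hZ
  have hAne := PhyloTree.mem_nonempty hA
  have hDne := PhyloTree.mem_nonempty hD
  have hEZc' : E ⊆ Zᶜ := hEZc.1
  have hZEc : ∀ a, a ∈ Z → a ∉ E := fun a ha hae => Finset.mem_compl.mp (hEZc' hae) ha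
  have dYA : Disjoint Y (E \ Y) := Finset.disjoint_sdiff
  have dYD : Disjoint Y (Zᶜ \ E) := Finset.disjoint_left.mpr
    (fun a ha h => (Finset.mem_sdiff.mp h).2 (hYE.1 ha))
  have dAZ : Disjoint (E \ Y) Z := Finset.disjoint_left.mpr
    (fun a ha h => hZEc a h (Finset.mem_sdiff.mp ha).1)
  have dAD : Disjoint (E \ Y) (Zᶜ \ E) := Finset.disjoint_left.mpr
    (fun a ha h => (Finset.mem_sdiff.mp h).2 (Finset.mem_sdiff.mp ha).1)
  have dZD : Disjoint Z (Zᶜ \ E) := Finset.disjoint_left.mpr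
    (fun a ha h => Finset.mem_compl.mp (Finset.mem_sdiff.mp h).1 ha)
  have huniv4 : ∀ a : Fin n, a ∈ Y ∨ a ∈ E \ Y ∨ a ∈ Z ∨ a ∈ Zᶜ \ E := by
    intro a
    by_cases haE : a ∈ E
    · by_cases haY : a ∈ Y
      · exact Or.inl haY
      · exact Or.inr (Or.inl (Finset.mem_sdiff.mpr ⟨haE, haY⟩))
    · by_cases haZ : a ∈ Z
      · exact Or.inr (Or.inr (Or.inl haZ))
      · exact Or.inr (Or.inr (Or.inr (Finset.mem_sdiff.mpr
          ⟨Finset.mem_compl.mpr haZ, haE⟩)))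
  have iE : Y ∪ (E \ Y) = E := Finset.union_sdiff_of_subset hYE.1
  have iEc : Z ∪ (Zᶜ \ E) = Eᶜ := by
    ext a
    simp only [Finset.mem_union, Finset.mem_sdiff, Finset.mem_compl]
    have h1 := hZEc a
    tauto
  have iswap : Eᶜ \ Z = Zᶜ \ E := by
    ext a
    simp only [Finset.mem_sdiff, Finset.mem_compl]
    tauto
  have iX : Y ∪ (Zᶜ \ E) = ((E \ Y) ∪ Z)ᶜ := by
    rw [← iswap, Finset.union_comm]
    exact PhyloTree.compl_swap_id' hYE.1 (PhyloTree.disjoint_of_subset_compl hEZc.1).symm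
  have hXc : ((E \ Y) ∪ Z)ᶜ ∉ T.sides := by
    intro h
    have := T.compl_mem _ h
    rw [compl_compl] at this
    exact hX this
  -- the four moves
  have m1 : (Sym2.mk Y Yᶜ, θ.2) ∈ T.ONNI := by
    refine PhyloTree.quartet_move_mem hY hA hZ hD dYA hdYZ dYD dAZ dAD dZD huniv4 ?_ hX ?_
    · rw [iE]; exact hE
    · rw [iE]; exact hform
  have m2 : (Sym2.mk Z Zᶜ, θ.2) ∈ T.ONNI := by
    refine PhyloTree.quartet_move_mem hZ hD hY hA dZD hdYZ.symm dAZ.symm dYD.symm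
      dAD.symm dYA (fun a => by have := huniv4 a; tauto) ?_ ?_ ?_
    · rw [iEc]; exact T.compl_mem E hE
    · rw [Finset.union_comm, iX]; exact hXc
    · rw [iEc, compl_compl, Finset.union_comm (Zᶜ \ E) Y, iX, compl_compl,
        Finset.pair_comm Eᶜ E, Finset.pair_comm (((E \ Y) ∪ Z)ᶜ) ((E \ Y) ∪ Z)]
      exact hform
  have m3 : (Sym2.mk (E \ Y) (E \ Y)ᶜ, θ.2) ∈ T.ONNI := by
    refine PhyloTree.quartet_move_mem hA hY hD hZ dYA.symm dAD dAZ dYD hdYZ dZD.symm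
      (fun a => by have := huniv4 a; tauto) ?_ ?_ ?_
    · rw [Finset.union_comm, iE]; exact hE
    · rw [iX]; exact hXc
    · rw [Finset.union_comm (E \ Y) Y, iE, iX, compl_compl,
        Finset.pair_comm (((E \ Y) ∪ Z)ᶜ) ((E \ Y) ∪ Z)]
      exact hform
  have m4 : (Sym2.mk (Zᶜ \ E) (Zᶜ \ E)ᶜ, θ.2) ∈ T.ONNI := by
    refine PhyloTree.quartet_move_mem hD hZ hA hY dZD.symm dAD.symm dYD.symm dAZ.symm
      hdYZ.symm dYA.symm (fun a => by have := huniv4 a; tauto) ?_ ?_ ?_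
    · rw [Finset.union_comm, iEc]; exact T.compl_mem E hE
    · rw [Finset.union_comm]; exact hX
    · rw [Finset.union_comm (Zᶜ \ E) Z, iEc, compl_compl, Finset.union_comm Z (E \ Y),
        Finset.pair_comm Eᶜ E]
      exact hform
  -- inequalities between the four splits
  have hYZc : Y ≠ Zᶜ := PhyloTree.ne_compl_of hAne (fun a ha => hEZc' (Finset.mem_sdiff.mp ha).1)
    dYA.symm
  have hYA : Y ≠ E \ Y := PhyloTree.ne_of_disjoint dYA hYne
  have hYAc : Y ≠ (E \ Y)ᶜ := PhyloTree.ne_compl_of hZne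
    (PhyloTree.subset_compl_of_disjoint dAZ) hdYZ.symm
  have hYD : Y ≠ Zᶜ \ E := PhyloTree.ne_of_disjoint dYD hYne
  have hYDc : Y ≠ (Zᶜ \ E)ᶜ := PhyloTree.ne_compl_of hZne
    (PhyloTree.subset_compl_of_disjoint dZD.symm) hdYZ.symm
  have hZA : Z ≠ E \ Y := PhyloTree.ne_of_disjoint dAZ.symm hZne
  have hZAc : Z ≠ (E \ Y)ᶜ := PhyloTree.ne_compl_of hYne
    (PhyloTree.subset_compl_of_disjoint dYA.symm) hdYZ
  have hZD : Z ≠ Zᶜ \ E := PhyloTree.ne_of_disjoint dZD hZne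
  have hZDc : Z ≠ (Zᶜ \ E)ᶜ := PhyloTree.ne_compl_of hYne
    (PhyloTree.subset_compl_of_disjoint dYD.symm) hdYZ
  have hAD : E \ Y ≠ Zᶜ \ E := PhyloTree.ne_of_disjoint dAD hAne
  have hADc : E \ Y ≠ (Zᶜ \ E)ᶜ := PhyloTree.ne_compl_of hYne
    (PhyloTree.subset_compl_of_disjoint dYD.symm) dYA
  have hYZ : Y ≠ Z := PhyloTree.ne_of_disjoint hdYZ hYne
  -- distinctness of the four moves
  have s12 := PhyloTree.sym2_ne hYZ hYZc
  have s13 := PhyloTree.sym2_ne hYA hYAc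
  have s14 := PhyloTree.sym2_ne hYD hYDc
  have s23 := PhyloTree.sym2_ne hZA hZAc
  have s24 := PhyloTree.sym2_ne hZD hZDc
  have s34 := PhyloTree.sym2_ne hAD hADc
  -- the set of redundant operations
  have hSeq : {θ' ∈ T.ONNI | θ'.2 = θ.2} =
      ({(Sym2.mk Y Yᶜ, θ.2), (Sym2.mk Z Zᶜ, θ.2),
        (Sym2.mk (E \ Y) (E \ Y)ᶜ, θ.2), (Sym2.mk (Zᶜ \ E) (Zᶜ \ E)ᶜ, θ.2)} :
        Set (PhyloTree.Move n)) := by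
    ext θ''
    simp only [Set.mem_setOf_eq, Set.mem_insert_iff, Set.mem_singleton_iff]
    constructor
    · rintro ⟨h'', hout⟩
      obtain ⟨hOTBR'', W, V, hσ'', hins'', hV'', hVW'', hd'', himg''⟩ := h''
      obtain ⟨hWT, hWT', hresW, hresWc⟩ := PhyloTree.otbr_extract hOTBR'' hσ''
      rw [hout] at hWT' hresWc himg''
      obtain ⟨E'', hE'', hWE'', hEVc'', huniq'', hA''m, hD''m, hX'', hform''⟩ :=
        PhyloTree.main_structure hne2 hWT hV'' hd'' himg'' hWT' hresWc
      have hX''c : ((E'' \ W) ∪ V)ᶜ ∉ T.sides := by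
        intro h
        have := T.compl_mem _ h
        rw [compl_compl] at this
        exact hX'' this
      obtain ⟨hEE, hXX⟩ := PhyloTree.form_unique hE'' hX hXc hX'' hX''c
        (hform.symm.trans hform'')
      have hθ1 : θ'' = (Sym2.mk W Wᶜ, θ.2) := by
        have h : θ'' = (θ''.1, θ''.2) := rfl
        rw [h, hσ'', hout]
      have hfin : W = Y ∨ W = Z ∨ W = E \ Y ∨ W = Zᶜ \ E := by
        rcases hEE with hEe|hEe
        · -- the deleted edge of θ'' is E itself
          rw [hEe] at hWE'' hXX
          rcases T.compatible W hWT Y hY with hc|hc|hc|hc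
          · rcases eq_or_ne W Y with rfl|hne'
            · exact Or.inl rfl
            · exfalso
              obtain ⟨a, haY, haW⟩ := Finset.exists_of_ssubset (lt_of_le_of_ne hc hne')
              obtain ⟨b, hbA⟩ := hAne
              have hbE := (Finset.mem_sdiff.mp hbA).1
              have hbY := (Finset.mem_sdiff.mp hbA).2
              have haX'' : a ∈ (E \ W) ∪ V := Finset.mem_union.mpr
                (Or.inl (Finset.mem_sdiff.mpr ⟨hYE.1 haY, haW⟩))
              have hbX'' : b ∈ (E \ W) ∪ V := Finset.mem_union.mpr
                (Or.inl (Finset.mem_sdiff.mpr ⟨hbE, fun hw => hbY (hc hw)⟩))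
              rcases hXX with h|h
              · rw [h] at haX''
                rcases Finset.mem_union.mp haX'' with hh|hh
                · exact (Finset.mem_sdiff.mp hh).2 haY
                · exact Finset.disjoint_left.mp hdYZ haY hh
              · rw [h] at hbX''
                exact Finset.mem_compl.mp hbX'' (Finset.mem_union.mpr (Or.inl hbA))
          · rcases T.compatible (E \ Y) hA W hWT with hc2|hc2|hc2|hc2
            · exfalso
              apply hWE''.ne
              refine Finset.Subset.antisymm hWE''.1 (fun a ha => ?_)
              by_cases haY : a ∈ Y
              exacts [hc haY, hc2 (Finset.mem_sdiff.mpr ⟨ha, haY⟩)]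
            · exfalso
              obtain ⟨y0, hy0⟩ := hYne
              exact (Finset.mem_sdiff.mp (hc2 (hc hy0))).2 hy0
            · refine Or.inl (Finset.Subset.antisymm (fun a ha => ?_) hc)
              by_contra haY
              exact Finset.disjoint_left.mp hc2
                (Finset.mem_sdiff.mpr ⟨hWE''.1 ha, haY⟩) ha
            · exfalso
              apply PhyloTree.mem_ne_univ hE
              refine Finset.eq_univ_iff_forall.mpr (fun a => ?_)
              rcases Finset.mem_union.mp (hc2 ▸ Finset.mem_univ a) with hh|hh
              exacts [(Finset.mem_sdiff.mp hh).1, hWE''.1 hh]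
          · have hsub : W ⊆ E \ Y := fun a ha => Finset.mem_sdiff.mpr
              ⟨hWE''.1 ha, fun hy => Finset.disjoint_left.mp hc ha hy⟩
            rcases eq_or_ne W (E \ Y) with rfl|hne'
            · exact Or.inr (Or.inr (Or.inl rfl))
            · exfalso
              obtain ⟨a, haA, haW⟩ := Finset.exists_of_ssubset (lt_of_le_of_ne hsub hne')
              obtain ⟨y0, hy0⟩ := hYne
              have haE := (Finset.mem_sdiff.mp haA).1
              have hy0X'' : y0 ∈ (E \ W) ∪ V := Finset.mem_union.mpr
                (Or.inl (Finset.mem_sdiff.mpr ⟨hYE.1 hy0,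
                  fun hw => Finset.disjoint_left.mp hc hw hy0⟩))
              have haX'' : a ∈ (E \ W) ∪ V := Finset.mem_union.mpr
                (Or.inl (Finset.mem_sdiff.mpr ⟨haE, haW⟩))
              rcases hXX with h|h
              · rw [h] at hy0X''
                rcases Finset.mem_union.mp hy0X'' with hh|hh
                · exact (Finset.mem_sdiff.mp hh).2 hy0
                · exact Finset.disjoint_left.mp hdYZ hy0 hh
              · rw [h] at haX''
                exact Finset.mem_compl.mp haX'' (Finset.mem_union.mpr (Or.inl haA))
          · exfalso
            apply PhyloTree.mem_ne_univ hE
            refine Finset.eq_univ_iff_forall.mpr (fun a => ?_)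
            rcases Finset.mem_union.mp (hc ▸ Finset.mem_univ a) with hh|hh
            exacts [hWE''.1 hh, hYE.1 hh]
        · -- the deleted edge of θ'' is Eᶜ
          rw [hEe] at hWE'' hXX
          rcases T.compatible W hWT Z hZ with hc|hc|hc|hc
          · rcases eq_or_ne W Z with rfl|hne'
            · exact Or.inr (Or.inl rfl)
            · exfalso
              obtain ⟨a, haZ, haW⟩ := Finset.exists_of_ssubset (lt_of_le_of_ne hc hne')
              obtain ⟨b, hbD⟩ := hDne
              have hbE : b ∉ E := (Finset.mem_sdiff.mp hbD).2
              have hbZ : b ∉ Z := Finset.mem_compl.mp (Finset.mem_sdiff.mp hbD).1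
              have haX'' : a ∈ (Eᶜ \ W) ∪ V := Finset.mem_union.mpr
                (Or.inl (Finset.mem_sdiff.mpr
                  ⟨Finset.mem_compl.mpr (hZEc a haZ), haW⟩))
              have hbX'' : b ∈ (Eᶜ \ W) ∪ V := Finset.mem_union.mpr
                (Or.inl (Finset.mem_sdiff.mpr
                  ⟨Finset.mem_compl.mpr hbE, fun hw => hbZ (hc hw)⟩))
              rcases hXX with h|h
              · rw [h] at hbX''
                rcases Finset.mem_union.mp hbX'' with hh|hh
                · exact hbE (Finset.mem_sdiff.mp hh).1
                · exact hbZ hh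
              · rw [h] at haX''
                exact Finset.mem_compl.mp haX''
                  (Finset.mem_union.mpr (Or.inr haZ))
          · rcases T.compatible (Zᶜ \ E) hD W hWT with hc2|hc2|hc2|hc2
            · exfalso
              apply hWE''.ne
              refine Finset.Subset.antisymm hWE''.1 (fun a ha => ?_)
              by_cases haZ : a ∈ Z
              · exact hc haZ
              · exact hc2 (Finset.mem_sdiff.mpr
                  ⟨Finset.mem_compl.mpr haZ, Finset.mem_compl.mp ha⟩)
            · exfalso
              obtain ⟨z0, hz0⟩ := hZne
              exact Finset.mem_compl.mp (Finset.mem_sdiff.mp (hc2 (hc hz0))).1 hz0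
            · refine Or.inr (Or.inl (Finset.Subset.antisymm (fun a ha => ?_) hc))
              by_contra haZ
              exact Finset.disjoint_left.mp hc2 (Finset.mem_sdiff.mpr
                ⟨Finset.mem_compl.mpr haZ, Finset.mem_compl.mp (hWE''.1 ha)⟩) ha
            · exfalso
              obtain ⟨y0, hy0⟩ := hYne
              have hy0E : y0 ∈ E := hYE.1 hy0
              rcases Finset.mem_union.mp (hc2 ▸ Finset.mem_univ y0) with hh|hh
              · exact (Finset.mem_sdiff.mp hh).2 hy0E
              · exact Finset.mem_compl.mp (hWE''.1 hh) hy0E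
          · have hsub : W ⊆ Zᶜ \ E := fun a ha => Finset.mem_sdiff.mpr
              ⟨Finset.mem_compl.mpr (fun hz => Finset.disjoint_left.mp hc ha hz),
                Finset.mem_compl.mp (hWE''.1 ha)⟩
            rcases eq_or_ne W (Zᶜ \ E) with rfl|hne'
            · exact Or.inr (Or.inr (Or.inr rfl))
            · exfalso
              obtain ⟨a, haD, haW⟩ := Finset.exists_of_ssubset (lt_of_le_of_ne hsub hne')
              obtain ⟨z0, hz0⟩ := hZne
              have haE : a ∉ E := (Finset.mem_sdiff.mp haD).2
              have haZ : a ∉ Z := Finset.mem_compl.mp (Finset.mem_sdiff.mp haD).1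
              have hz0X'' : z0 ∈ (Eᶜ \ W) ∪ V := Finset.mem_union.mpr
                (Or.inl (Finset.mem_sdiff.mpr ⟨Finset.mem_compl.mpr (hZEc z0 hz0),
                  fun hw => Finset.disjoint_left.mp hc hw hz0⟩))
              have haX'' : a ∈ (Eᶜ \ W) ∪ V := Finset.mem_union.mpr
                (Or.inl (Finset.mem_sdiff.mpr ⟨Finset.mem_compl.mpr haE, haW⟩))
              rcases hXX with h|h
              · rw [h] at haX''
                rcases Finset.mem_union.mp haX'' with hh|hh
                · exact haE (Finset.mem_sdiff.mp hh).1
                · exact haZ hh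
              · rw [h] at hz0X''
                exact Finset.mem_compl.mp hz0X'' (Finset.mem_union.mpr (Or.inr hz0))
          · exfalso
            obtain ⟨y0, hy0⟩ := hYne
            have hy0E : y0 ∈ E := hYE.1 hy0
            rcases Finset.mem_union.mp (hc ▸ Finset.mem_univ y0) with hh|hh
            · exact Finset.mem_compl.mp (hWE''.1 hh) hy0E
            · exact hZEc y0 hh hy0E
      rcases hfin with rfl|rfl|rfl|rfl
      · exact Or.inl hθ1
      · exact Or.inr (Or.inl hθ1)
      · exact Or.inr (Or.inr (Or.inl hθ1))
      · exact Or.inr (Or.inr (Or.inr hθ1))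
    · rintro (rfl|rfl|rfl|rfl)
      exacts [⟨m1, rfl⟩, ⟨m2, rfl⟩, ⟨m3, rfl⟩, ⟨m4, rfl⟩]
  rw [hSeq]
  have d12 : (Sym2.mk Y Yᶜ, θ.2) ≠ (Sym2.mk Z Zᶜ, θ.2) :=
    fun h => s12 (congrArg Prod.fst h)
  have d13 : (Sym2.mk Y Yᶜ, θ.2) ≠ (Sym2.mk (E \ Y) (E \ Y)ᶜ, θ.2) :=
    fun h => s13 (congrArg Prod.fst h)
  have d14 : (Sym2.mk Y Yᶜ, θ.2) ≠ (Sym2.mk (Zᶜ \ E) (Zᶜ \ E)ᶜ, θ.2) :=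
    fun h => s14 (congrArg Prod.fst h)
  have d23 : (Sym2.mk Z Zᶜ, θ.2) ≠ (Sym2.mk (E \ Y) (E \ Y)ᶜ, θ.2) :=
    fun h => s23 (congrArg Prod.fst h)
  have d24 : (Sym2.mk Z Zᶜ, θ.2) ≠ (Sym2.mk (Zᶜ \ E) (Zᶜ \ E)ᶜ, θ.2) :=
    fun h => s24 (congrArg Prod.fst h)
  have d34 : (Sym2.mk (E \ Y) (E \ Y)ᶜ, θ.2) ≠ (Sym2.mk (Zᶜ \ E) (Zᶜ \ E)ᶜ, θ.2) :=
    fun h => s34 (congrArg Prod.fst h)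
  rw [Set.ncard_insert_of_notMem (by
      simp only [Set.mem_insert_iff, Set.mem_singleton_iff]
      push_neg
      exact ⟨d12, d13, d14⟩) (Set.toFinite _),
    Set.ncard_insert_of_notMem (by
      simp only [Set.mem_insert_iff, Set.mem_singleton_iff]
      push_neg
      exact ⟨d23, d24⟩) (Set.toFinite _),
    Set.ncard_pair d34]
end

section
/- Let n ≥ 4, let T ∈ 𝒯_n, and let θ, θ' ∈ O_TBR(T) be distinct TBR operations on T. If θ(T) = θ'(T), then θ is an NNI operation, i.e. θ ∈ O_NNI(T). -/
namespace PhyloTree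

variable {n : ℕ}

lemma ext_of_sides {T T' : PhyloTree n} (h : T.sides = T'.sides) : T = T' := by
  cases T; cases T'; subst h; rfl

lemma nonempty_of_mem {T : PhyloTree n} {C : Finset (Fin n)} (h : C ∈ T.sides) :
    C.Nonempty := (T.proper C h).1

lemma ne_univ_of_mem {T : PhyloTree n} {C : Finset (Fin n)} (h : C ∈ T.sides) :
    C ≠ Finset.univ := (T.proper C h).2

lemma compl_nonempty_of_mem {T : PhyloTree n} {C : Finset (Fin n)} (h : C ∈ T.sides) :
    Cᶜ.Nonempty := by
  rw [Finset.nonempty_iff_ne_empty]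
  intro hc
  exact ne_univ_of_mem h (by rwa [← Finset.compl_eq_empty_iff])

lemma compat {T : PhyloTree n} {C D : Finset (Fin n)} (hC : C ∈ T.sides) (hD : D ∈ T.sides) :
    SidesCompatible C D := T.compatible C hC D hD

lemma compat_symm {C D : Finset (Fin n)} (h : SidesCompatible C D) :
    SidesCompatible D C := by
  rcases h with h | h | h | h
  · exact Or.inr (Or.inl h)
  · exact Or.inl h
  · exact Or.inr (Or.inr (Or.inl h.symm))
  · exact Or.inr (Or.inr (Or.inr (by rwa [Finset.union_comm])))

lemma compat_compl_left {C D : Finset (Fin n)} (h : SidesCompatible C D) :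
    SidesCompatible Cᶜ D := by
  rcases h with h | h | h | h
  · refine Or.inr (Or.inr (Or.inr ?_))
    rw [Finset.eq_univ_iff_forall]
    intro x
    simp only [Finset.mem_union, Finset.mem_compl]
    by_cases hx : x ∈ C
    · exact Or.inr (h hx)
    · exact Or.inl hx
  · refine Or.inr (Or.inr (Or.inl ?_))
    rw [Finset.disjoint_right]
    intro x hx
    simp only [Finset.mem_compl, not_not]
    exact h hx
  · refine Or.inr (Or.inl ?_)
    intro x hx
    simp only [Finset.mem_compl]
    exact Finset.disjoint_right.1 h hx
  · refine Or.inl ?_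
    intro x hx
    simp only [Finset.mem_compl] at hx
    have := (Finset.eq_univ_iff_forall.1 h) x
    simp only [Finset.mem_union] at this
    tauto

lemma compat_compl_iff {C D : Finset (Fin n)} :
    SidesCompatible Cᶜ D ↔ SidesCompatible C D := by
  constructor
  · intro h
    have := compat_compl_left h
    rwa [compl_compl] at this
  · exact compat_compl_left

lemma exists_incompat {T : PhyloTree n} {C : Finset (Fin n)} (h1 : C.Nonempty)
    (h2 : C ≠ Finset.univ) (h : C ∉ T.sides) :
    ∃ E ∈ T.sides, ¬ SidesCompatible C E := by
  by_contra hc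
  push_neg at hc
  exact h (T.maximal C h1 h2 hc)

/-- Lemma R : across an agreeing restriction, a side either persists or flips. -/
lemma persist_or_flip {T T' : PhyloTree n} {A C : Finset (Fin n)}
    (hr : T.restrict A = T'.restrict A) (hA' : A ∈ T'.sides)
    (hC : C ∈ T.sides) (hCA : C ⊆ A) (hne : C ≠ A) :
    C ∈ T'.sides ∨ A \ C ∈ T'.sides := by
  have hmem : C ∈ T'.restrict A := by
    rw [← hr]
    exact Finset.mem_image.2 ⟨C, hC, by rw [Finset.inter_eq_left.2 hCA]⟩
  obtain ⟨D, hD, hDA⟩ := Finset.mem_image.1 hmem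
  -- ok
  rcases compat hD hA' with h | h | h | h
  · left; rwa [← hDA, Finset.inter_eq_left.2 h]
  · exfalso; apply hne; rw [← hDA, Finset.inter_eq_right.2 h]
  · exfalso
    have : C = ∅ := by rw [← hDA, Finset.disjoint_iff_inter_eq_empty.1 h]
    exact (nonempty_of_mem hC).ne_empty this
  · right
    have hDc : Dᶜ ∈ T'.sides := T'.compl_mem D hD
    have : A \ C = Dᶜ := by
      ext x
      simp only [Finset.mem_sdiff, Finset.mem_compl, ← hDA, Finset.mem_inter]
      constructor
      · tauto
      · intro hx
        have := (Finset.eq_univ_iff_forall.1 h) x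
        simp only [Finset.mem_union] at this
        tauto
    rw [this]; exact hDc

end PhyloTree
namespace PhyloTree

variable {n : ℕ}

/-- Bundle of hypotheses: `T, T'` both have the splits `A|Aᶜ` and `B|Bᶜ` with
`B ⊊ A`, and the four restrictions agree. -/
structure Setup (T T' : PhyloTree n) (A B : Finset (Fin n)) : Prop where
  hA : A ∈ T.sides
  hA' : A ∈ T'.sides
  hB : B ∈ T.sides
  hB' : B ∈ T'.sides
  hBA : B ⊆ A
  hBneA : B ≠ A
  rA : T.restrict A = T'.restrict A
  rAc : T.restrict Aᶜ = T'.restrict Aᶜ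
  rB : T.restrict B = T'.restrict B
  rBc : T.restrict Bᶜ = T'.restrict Bᶜ

lemma Setup.symm {T T' : PhyloTree n} {A B : Finset (Fin n)} (s : Setup T T' A B) :
    Setup T' T A B :=
  ⟨s.hA', s.hA, s.hB', s.hB, s.hBA, s.hBneA, s.rA.symm, s.rAc.symm, s.rB.symm, s.rBc.symm⟩

lemma Setup.dual {T T' : PhyloTree n} {A B : Finset (Fin n)} (s : Setup T T' A B) :
    Setup T T' Bᶜ Aᶜ := by
  refine ⟨T.compl_mem B s.hB, T'.compl_mem B s.hB', T.compl_mem A s.hA, T'.compl_mem A s.hA',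
    ?_, ?_, s.rBc, by simpa using s.rB, s.rAc, by simpa using s.rA⟩
  · intro x hx
    simp only [Finset.mem_compl] at hx ⊢
    exact fun h => hx (s.hBA h)
  · intro h
    refine s.hBneA ?_
    have h2 := congrArg (·ᶜ) h
    simpa using h2.symm

lemma Setup.M_nonempty {T T' : PhyloTree n} {A B : Finset (Fin n)} (s : Setup T T' A B) :
    (A \ B).Nonempty :=
  Finset.sdiff_nonempty.2 (fun h => s.hBneA (Finset.Subset.antisymm s.hBA h))

/-- Key preservation lemma: every side of `T` strictly inside `Aᶜ` is a side of `T'`. -/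
lemma pres_Ac {T T' : PhyloTree n} {A B : Finset (Fin n)} (s : Setup T T' A B)
    {C : Finset (Fin n)} (hC : C ∈ T.sides) (hCA : C ⊆ Aᶜ) (hne : C ≠ Aᶜ) :
    C ∈ T'.sides := by
  by_contra hC'
  obtain ⟨m, hm⟩ := s.M_nonempty
  rw [Finset.mem_sdiff] at hm
  obtain ⟨hmA, hmB⟩ := hm
  obtain ⟨b, hb⟩ := nonempty_of_mem s.hB
  obtain ⟨w, hw⟩ : (Aᶜ \ C).Nonempty :=
    Finset.sdiff_nonempty.2 (fun h => hne (Finset.Subset.antisymm hCA h))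
  rw [Finset.mem_sdiff] at hw
  have hmC : m ∉ C := fun h => (Finset.mem_compl.1 (hCA h)) hmA
  have hK1 : Aᶜ \ C ∈ T'.sides :=
    (persist_or_flip s.rAc (T'.compl_mem A s.hA') hC hCA hne).resolve_left hC'
  have hCBc : C ⊆ Bᶜ := by
    intro x hx
    simp only [Finset.mem_compl]
    exact fun h => (Finset.mem_compl.1 (hCA hx)) (s.hBA h)
  have hCBcne : C ≠ Bᶜ := by
    intro h
    have : m ∈ C := by rw [h]; simpa using hmB
    exact hmC this
  have hK2 : Bᶜ \ C ∈ T'.sides :=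
    (persist_or_flip s.rBc (T'.compl_mem B s.hB') hC hCBc hCBcne).resolve_left hC'
  obtain ⟨E, hE, hinc⟩ := exists_incompat (nonempty_of_mem hC) (ne_univ_of_mem hC) hC'
  have hmK2 : m ∈ Bᶜ \ C := by
    simp only [Finset.mem_sdiff, Finset.mem_compl]
    exact ⟨hmB, hmC⟩
  have hK12 : Aᶜ \ C ⊆ Bᶜ \ C := by
    intro x hx
    simp only [Finset.mem_sdiff] at hx ⊢
    exact ⟨Finset.mem_compl.2 (fun h => (Finset.mem_compl.1 hx.1) (s.hBA h)), hx.2⟩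
  rcases compat hE s.hA' with cEA | cEA | cEA | cEA
  · -- E ⊆ A : C and E are disjoint
    exact hinc (Or.inr (Or.inr (Or.inl (Finset.disjoint_left.2
      (fun {x} hx hxE => (Finset.mem_compl.1 (hCA hx)) (cEA hxE))))))
  · -- A ⊆ E
    rcases compat hE hK1 with c1 | c1 | c1 | c1
    · obtain ⟨a, ha⟩ := nonempty_of_mem s.hA
      have := c1 (cEA ha)
      rw [Finset.mem_sdiff, Finset.mem_compl] at this
      exact this.1 ha
    · refine hinc (Or.inr (Or.inr (Or.inr ?_)))
      rw [Finset.eq_univ_iff_forall]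
      intro x
      rw [Finset.mem_union]
      by_cases hxA : x ∈ A
      · exact Or.inr (cEA hxA)
      · by_cases hxC : x ∈ C
        · exact Or.inl hxC
        · exact Or.inr (c1 (by simp [Finset.mem_sdiff, Finset.mem_compl, hxA, hxC]))
    · rcases compat hE hK2 with c2 | c2 | c2 | c2
      · have := c2 (cEA (s.hBA hb))
        rw [Finset.mem_sdiff, Finset.mem_compl] at this
        exact this.1 hb
      · -- K2 ⊆ E but K1 ⊆ K2 and Disjoint E K1 : K1 = ∅, contradiction with w
        have hwK1 : w ∈ Aᶜ \ C := by simp [Finset.mem_sdiff, hw.1, hw.2]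
        exact (Finset.disjoint_left.1 c1 (c2 (hK12 hwK1))) hwK1
      · exact (Finset.disjoint_left.1 c2 (cEA hmA)) hmK2
      · refine hinc (Or.inl ?_)
        intro x hx
        have := (Finset.eq_univ_iff_forall.1 c2) x
        rw [Finset.mem_union, Finset.mem_sdiff] at this
        tauto
    · refine hinc (Or.inl ?_)
      intro x hx
      have := (Finset.eq_univ_iff_forall.1 c1) x
      rw [Finset.mem_union, Finset.mem_sdiff] at this
      tauto
  · -- Disjoint E A
    rcases compat hE hK1 with c1 | c1 | c1 | c1
    · refine hinc (Or.inr (Or.inr (Or.inl (Finset.disjoint_left.2 (fun {x} hx hxE => ?_)))))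
      have := c1 hxE
      rw [Finset.mem_sdiff] at this
      exact this.2 hx
    · rcases compat hE hK2 with c2 | c2 | c2 | c2
      · refine hinc (Or.inr (Or.inr (Or.inl (Finset.disjoint_left.2 (fun {x} hx hxE => ?_)))))
        have := c2 hxE
        rw [Finset.mem_sdiff] at this
        exact this.2 hx
      · exact (Finset.disjoint_left.1 cEA (c2 hmK2)) hmA
      · have hwK1 : w ∈ Aᶜ \ C := by simp [Finset.mem_sdiff, hw.1, hw.2]
        exact (Finset.disjoint_left.1 c2 (c1 hwK1)) (hK12 hwK1)
      · have := (Finset.eq_univ_iff_forall.1 c2) b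
        rw [Finset.mem_union, Finset.mem_sdiff, Finset.mem_compl] at this
        rcases this with h | h
        · exact (Finset.disjoint_left.1 cEA h) (s.hBA hb)
        · exact h.1 hb
    · refine hinc (Or.inr (Or.inl ?_))
      intro x hxE
      have hxAc : x ∈ Aᶜ := Finset.mem_compl.2 (Finset.disjoint_left.1 cEA hxE)
      by_contra hxC
      exact (Finset.disjoint_left.1 c1 hxE) (by simp [Finset.mem_sdiff, hxAc, hxC])
    · obtain ⟨a, ha⟩ := nonempty_of_mem s.hA
      have := (Finset.eq_univ_iff_forall.1 c1) a
      rw [Finset.mem_union, Finset.mem_sdiff, Finset.mem_compl] at this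
      rcases this with h | h
      · exact (Finset.disjoint_left.1 cEA h) ha
      · exact h.1 ha
  · -- E ∪ A = univ : C ⊆ E
    refine hinc (Or.inl ?_)
    intro x hx
    have := (Finset.eq_univ_iff_forall.1 cEA) x
    rw [Finset.mem_union] at this
    rcases this with h | h
    · exact h
    · exact absurd h (Finset.mem_compl.1 (hCA hx))

end PhyloTree
namespace PhyloTree

variable {n : ℕ}

lemma compat_compl_right {C D : Finset (Fin n)} (h : SidesCompatible C Dᶜ) :
    SidesCompatible C D := by
  have h2 := compat_compl_left (compat_symm h)
  rw [compl_compl] at h2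
  exact compat_symm h2

lemma pres_B {T T' : PhyloTree n} {A B : Finset (Fin n)} (s : Setup T T' A B)
    {C : Finset (Fin n)} (hC : C ∈ T.sides) (hCB : C ⊆ B) (hne : C ≠ B) :
    C ∈ T'.sides :=
  pres_Ac s.dual hC (by simpa using hCB) (by simpa using hne)

/-- Stability inside the middle region `M = A \ B`. -/
lemma stab_M {T T' : PhyloTree n} {A B : Finset (Fin n)} (s : Setup T T' A B)
    {C : Finset (Fin n)} (hC : C ∈ T.sides) (hCM : C ⊆ A \ B) (hne : C ≠ A \ B) :
    C ∈ T'.sides := by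
  by_contra hC'
  obtain ⟨b, hb⟩ := nonempty_of_mem s.hB
  obtain ⟨w, hw⟩ := compl_nonempty_of_mem s.hA
  have hwA : w ∉ A := Finset.mem_compl.1 hw
  have hCA : C ⊆ A := fun x hx => (Finset.mem_sdiff.1 (hCM hx)).1
  have hCB : ∀ x ∈ C, x ∉ B := fun x hx => (Finset.mem_sdiff.1 (hCM hx)).2
  have hCneA : C ≠ A := by
    intro h
    exact hCB b (h ▸ s.hBA hb) hb
  have h1 : A \ C ∈ T'.sides :=
    (persist_or_flip s.rA s.hA' hC hCA hCneA).resolve_left hC'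
  have hCBc : C ⊆ Bᶜ := fun x hx => Finset.mem_compl.2 (hCB x hx)
  have hCneBc : C ≠ Bᶜ := by
    intro h
    exact hwA (hCA (h ▸ Finset.mem_compl.2 (fun hB1 => hwA (s.hBA hB1))))
  have h2 : Bᶜ \ C ∈ T'.sides :=
    (persist_or_flip s.rBc (T'.compl_mem B s.hB') hC hCBc hCneBc).resolve_left hC'
  obtain ⟨u, hu⟩ : ((A \ B) \ C).Nonempty :=
    Finset.sdiff_nonempty.2 (fun h => hne (Finset.Subset.antisymm hCM h))
  rw [Finset.mem_sdiff, Finset.mem_sdiff] at hu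
  obtain ⟨c, hc⟩ := nonempty_of_mem hC
  rcases compat h1 h2 with h | h | h | h
  · have := h (by rw [Finset.mem_sdiff]; exact ⟨s.hBA hb, fun hx => hCB b hx hb⟩)
    rw [Finset.mem_sdiff, Finset.mem_compl] at this
    exact this.1 hb
  · have := h (by
      rw [Finset.mem_sdiff, Finset.mem_compl]
      exact ⟨fun hB1 => hwA (s.hBA hB1), fun hxC => hwA (hCA hxC)⟩)
    rw [Finset.mem_sdiff] at this
    exact hwA this.1
  · have hu1 : u ∈ A \ C := by rw [Finset.mem_sdiff]; exact ⟨hu.1.1, hu.2⟩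
    have hu2 : u ∈ Bᶜ \ C := by
      rw [Finset.mem_sdiff, Finset.mem_compl]; exact ⟨hu.1.2, hu.2⟩
    exact Finset.disjoint_left.1 h hu1 hu2
  · have := (Finset.eq_univ_iff_forall.1 h) c
    rw [Finset.mem_union, Finset.mem_sdiff, Finset.mem_sdiff] at this
    rcases this with h' | h'
    · exact h'.2 hc
    · exact h'.2 hc

/-- If a strictly-middle side of `T` dies, both middle gap pieces are sides of both trees. -/
lemma mid_death {T T' : PhyloTree n} {A B : Finset (Fin n)} (s : Setup T T' A B)
    {C : Finset (Fin n)} (hC : C ∈ T.sides) (hBC : B ⊆ C) (hCA : C ⊆ A)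
    (hneB : C ≠ B) (hneA : C ≠ A) (hC' : C ∉ T'.sides) :
    (C \ B ∈ T.sides ∧ C \ B ∈ T'.sides) ∧ (A \ C ∈ T.sides ∧ A \ C ∈ T'.sides) := by
  have h1 : A \ C ∈ T'.sides :=
    (persist_or_flip s.rA s.hA' hC hCA hneA).resolve_left hC'
  have hCc : Cᶜ ∈ T.sides := T.compl_mem C hC
  have hCcBc : Cᶜ ⊆ Bᶜ := fun x hx => Finset.mem_compl.2
    (fun hB1 => (Finset.mem_compl.1 hx) (hBC hB1))
  have hCcne : Cᶜ ≠ Bᶜ := by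
    intro h
    apply hneB
    have := congrArg (·ᶜ) h
    simpa using this
  have h2 : C \ B ∈ T'.sides := by
    rcases persist_or_flip s.rBc (T'.compl_mem B s.hB') hCc hCcBc hCcne with h | h
    · exact absurd (by simpa using T'.compl_mem _ h) hC'
    · have : Bᶜ \ Cᶜ = C \ B := by
        ext x
        simp only [Finset.mem_sdiff, Finset.mem_compl, not_not]
        tauto
      rwa [this] at h
  -- transfer back to T using stab_M in the reverse direction
  obtain ⟨u, hu⟩ : (C \ B).Nonempty :=
    Finset.sdiff_nonempty.2 (fun h => hneB (Finset.Subset.antisymm h hBC))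
  obtain ⟨v, hv⟩ : (A \ C).Nonempty :=
    Finset.sdiff_nonempty.2 (fun h => hneA (Finset.Subset.antisymm hCA h))
  rw [Finset.mem_sdiff] at hu hv
  have hsub1 : C \ B ⊆ A \ B := fun x hx => by
    rw [Finset.mem_sdiff] at hx ⊢; exact ⟨hCA hx.1, hx.2⟩
  have hsub2 : A \ C ⊆ A \ B := fun x hx => by
    rw [Finset.mem_sdiff] at hx ⊢; exact ⟨hx.1, fun hB1 => hx.2 (hBC hB1)⟩
  have hne1 : C \ B ≠ A \ B := by
    intro h
    have : v ∈ C \ B := by rw [h, Finset.mem_sdiff]; exact ⟨hv.1, fun hB1 => hv.2 (hBC hB1)⟩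
    exact hv.2 (Finset.mem_sdiff.1 this).1
  have hne2 : A \ C ≠ A \ B := by
    intro h
    have : u ∈ A \ C := by rw [h, Finset.mem_sdiff]; exact ⟨hCA hu.1, hu.2⟩
    exact (Finset.mem_sdiff.1 this).2 hu.1
  exact ⟨⟨stab_M s.symm h2 hsub1 hne1, h2⟩, ⟨stab_M s.symm h1 hsub2 hne2, h1⟩⟩

/-- Any strictly-middle side is `B ∪ G1` or `B ∪ G2`, given a side partition `G1 | G2` of the
middle region. -/
lemma mid_classify {S : PhyloTree n} {A B G1 G2 C : Finset (Fin n)}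
    (hA : A ∈ S.sides) (hB : B ∈ S.sides) (hBA : B ⊆ A)
    (hG1 : G1 ∈ S.sides) (hG2 : G2 ∈ S.sides) (hdisj : Disjoint G1 G2)
    (hU : G1 ∪ G2 = A \ B)
    (hC : C ∈ S.sides) (hBC : B ⊆ C) (hCA : C ⊆ A) (hneB : C ≠ B) (hneA : C ≠ A) :
    C = B ∪ G1 ∨ C = B ∪ G2 := by
  obtain ⟨b, hb⟩ := nonempty_of_mem hB
  have hAne := ne_univ_of_mem hA
  have hGM : ∀ x, (x ∈ G1 ∨ x ∈ G2) ↔ (x ∈ A ∧ x ∉ B) := by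
    intro x
    rw [← Finset.mem_union, hU, Finset.mem_sdiff]
  have key : ∀ G, G ∈ S.sides → G ⊆ A \ B → (G ⊆ C ∨ Disjoint C G) := by
    intro G hG hGsub
    rcases compat hC hG with h | h | h | h
    · exfalso
      have := hGsub (h (hBC hb))
      rw [Finset.mem_sdiff] at this
      exact this.2 hb
    · exact Or.inl h
    · exact Or.inr h
    · exfalso
      apply hAne
      rw [Finset.eq_univ_iff_forall]
      intro x
      have := (Finset.eq_univ_iff_forall.1 h) x
      rw [Finset.mem_union] at this
      rcases this with h' | h'
      · exact hCA h'
      · exact (Finset.mem_sdiff.1 (hGsub h')).1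
  have hG1sub : G1 ⊆ A \ B := fun x hx => by rw [← hU]; exact Finset.mem_union_left _ hx
  have hG2sub : G2 ⊆ A \ B := fun x hx => by rw [← hU]; exact Finset.mem_union_right _ hx
  rcases key G1 hG1 hG1sub with k1 | k1 <;> rcases key G2 hG2 hG2sub with k2 | k2
  · exfalso
    apply hneA
    refine Finset.Subset.antisymm hCA (fun x hx => ?_)
    by_cases hxB : x ∈ B
    · exact hBC hxB
    · rcases (hGM x).2 ⟨hx, hxB⟩ with h | h
      · exact k1 h
      · exact k2 h
  · left
    refine Finset.Subset.antisymm (fun x hx => ?_) ?_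
    · rw [Finset.mem_union]
      by_cases hxB : x ∈ B
      · exact Or.inl hxB
      · rcases (hGM x).2 ⟨hCA hx, hxB⟩ with h | h
        · exact Or.inr h
        · exact absurd hx (Finset.disjoint_right.1 k2 h)
    · rw [Finset.union_subset_iff]; exact ⟨hBC, k1⟩
  · right
    refine Finset.Subset.antisymm (fun x hx => ?_) ?_
    · rw [Finset.mem_union]
      by_cases hxB : x ∈ B
      · exact Or.inl hxB
      · rcases (hGM x).2 ⟨hCA hx, hxB⟩ with h | h
        · exact absurd hx (Finset.disjoint_right.1 k1 h)
        · exact Or.inr h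
    · rw [Finset.union_subset_iff]; exact ⟨hBC, k2⟩
  · exfalso
    apply hneB
    refine Finset.Subset.antisymm (fun x hx => ?_) hBC
    by_cases hxB : x ∈ B
    · exact hxB
    · rcases (hGM x).2 ⟨hCA hx, hxB⟩ with h | h
      · exact absurd hx (Finset.disjoint_right.1 k1 h)
      · exact absurd hx (Finset.disjoint_right.1 k2 h)

lemma not_both_mid {S : PhyloTree n} {A B G1 G2 : Finset (Fin n)}
    (hA : A ∈ S.sides) (hBA : B ⊆ A) (hBnon : B.Nonempty)
    (hG1non : G1.Nonempty) (hG2non : G2.Nonempty) (hdisj : Disjoint G1 G2)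
    (hU : G1 ∪ G2 = A \ B)
    (h1 : B ∪ G1 ∈ S.sides) (h2 : B ∪ G2 ∈ S.sides) : False := by
  obtain ⟨b, hb⟩ := hBnon
  obtain ⟨g1, hg1⟩ := hG1non
  obtain ⟨g2, hg2⟩ := hG2non
  have hg1M : g1 ∈ A \ B := by rw [← hU]; exact Finset.mem_union_left _ hg1
  have hg2M : g2 ∈ A \ B := by rw [← hU]; exact Finset.mem_union_right _ hg2
  rw [Finset.mem_sdiff] at hg1M hg2M
  rcases compat h1 h2 with h | h | h | h
  · have := h (Finset.mem_union_right _ hg1)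
    rw [Finset.mem_union] at this
    rcases this with h' | h'
    · exact hg1M.2 h'
    · exact (Finset.disjoint_left.1 hdisj hg1) h'
  · have := h (Finset.mem_union_right _ hg2)
    rw [Finset.mem_union] at this
    rcases this with h' | h'
    · exact hg2M.2 h'
    · exact (Finset.disjoint_left.1 hdisj h') hg2
  · exact (Finset.disjoint_left.1 h (Finset.mem_union_left _ hb)) (Finset.mem_union_left _ hb)
  · apply ne_univ_of_mem hA
    rw [Finset.eq_univ_iff_forall]
    intro x
    have := (Finset.eq_univ_iff_forall.1 h) x
    simp only [Finset.mem_union] at this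
    rcases this with (h' | h') | (h' | h')
    · exact hBA h'
    · exact ((Finset.mem_sdiff.1 (by rw [← hU]; exact Finset.mem_union_left _ h')).1)
    · exact hBA h'
    · exact ((Finset.mem_sdiff.1 (by rw [← hU]; exact Finset.mem_union_right _ h')).1)

lemma M_not_mem_of_mid {S : PhyloTree n} {A B G1 G2 : Finset (Fin n)}
    (hA : A ∈ S.sides) (hBA : B ⊆ A) (hBnon : B.Nonempty)
    (hG1non : G1.Nonempty) (hG2non : G2.Nonempty) (hdisj : Disjoint G1 G2)
    (hU : G1 ∪ G2 = A \ B)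
    (h1 : B ∪ G1 ∈ S.sides) : A \ B ∉ S.sides := by
  intro hM
  obtain ⟨b, hb⟩ := hBnon
  obtain ⟨g1, hg1⟩ := hG1non
  obtain ⟨g2, hg2⟩ := hG2non
  have hg1M : g1 ∈ A \ B := by rw [← hU]; exact Finset.mem_union_left _ hg1
  have hg2M : g2 ∈ A \ B := by rw [← hU]; exact Finset.mem_union_right _ hg2
  have hbM : b ∉ A \ B := fun h => (Finset.mem_sdiff.1 h).2 hb
  rcases compat hM h1 with h | h | h | h
  · have := h hg2M
    rw [Finset.mem_union] at this
    rcases this with h' | h'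
    · exact (Finset.mem_sdiff.1 hg2M).2 h'
    · exact (Finset.disjoint_left.1 hdisj h') hg2
  · exact hbM (h (Finset.mem_union_left _ hb))
  · exact (Finset.disjoint_left.1 h hg1M) (Finset.mem_union_right _ hg1)
  · apply ne_univ_of_mem hA
    rw [Finset.eq_univ_iff_forall]
    intro x
    have := (Finset.eq_univ_iff_forall.1 h) x
    simp only [Finset.mem_union, Finset.mem_sdiff] at this
    rcases this with h' | (h' | h')
    · exact h'.1
    · exact hBA h'
    · exact (Finset.mem_sdiff.1 (by rw [← hU]; exact Finset.mem_union_left _ h')).1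

/-- Gap lemma (instance): if there are no strictly-middle sides between `B` and `A`,
then `A \ B` is a side. -/
lemma gap_mem {S : PhyloTree n} {A B : Finset (Fin n)}
    (hA : A ∈ S.sides) (hB : B ∈ S.sides) (hBA : B ⊆ A) (hBneA : B ≠ A)
    (nostrict : ∀ C ∈ S.sides, B ⊆ C → C ⊆ A → C = B ∨ C = A) :
    A \ B ∈ S.sides := by
  obtain ⟨b, hb⟩ := nonempty_of_mem hB
  have hMnon : (A \ B).Nonempty :=
    Finset.sdiff_nonempty.2 (fun h => hBneA (Finset.Subset.antisymm hBA h))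
  have hMne : A \ B ≠ Finset.univ := by
    intro h
    have : b ∈ A \ B := by rw [h]; exact Finset.mem_univ b
    exact (Finset.mem_sdiff.1 this).2 hb
  have core : ∀ E ∈ S.sides, E ⊆ A → SidesCompatible (A \ B) E := by
    intro E hE hEA
    rcases compat hE hB with h | h | h | h
    · exact Or.inr (Or.inr (Or.inl (Finset.disjoint_right.2
        (fun {x} hx => fun hxM => (Finset.mem_sdiff.1 hxM).2 (h hx)))))
    · rcases nostrict E hE h hEA with rfl | rfl
      · exact Or.inr (Or.inr (Or.inl (Finset.disjoint_left.2
          (fun {x} hxM hx => (Finset.mem_sdiff.1 hxM).2 hx))))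
      · exact Or.inl (fun x hx => (Finset.mem_sdiff.1 hx).1)
    · exact Or.inr (Or.inl (fun x hx => Finset.mem_sdiff.2
        ⟨hEA hx, Finset.disjoint_left.1 h hx⟩))
    · exfalso
      apply ne_univ_of_mem hA
      rw [Finset.eq_univ_iff_forall]
      intro x
      have := (Finset.eq_univ_iff_forall.1 h) x
      rw [Finset.mem_union] at this
      rcases this with h' | h'
      · exact hEA h'
      · exact hBA h'
  apply S.maximal _ hMnon hMne
  intro E hE
  rcases compat hE hA with h | h | h | h
  · exact core E hE h
  · exact Or.inl (fun x hx => h (Finset.mem_sdiff.1 hx).1)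
  · exact Or.inr (Or.inr (Or.inl (Finset.disjoint_right.2
      (fun {x} hx hxM => Finset.disjoint_left.1 h hx (Finset.mem_sdiff.1 hxM).1))))
  · have hEc : Eᶜ ⊆ A := by
      intro x hx
      have := (Finset.eq_univ_iff_forall.1 h) x
      rw [Finset.mem_union] at this
      rcases this with h' | h'
      · exact absurd h' (Finset.mem_compl.1 hx)
      · exact h'
    exact compat_compl_right (core Eᶜ (S.compl_mem E hE) hEc)

end PhyloTree
namespace PhyloTree

variable {n : ℕ}

lemma swap_eq_first {Y Z C : Finset (Fin n)} (h1 : Y ⊆ C) (h2 : Disjoint Z C) :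
    swapSide Y Z C = (C \ Y) ∪ Z := if_pos ⟨h1, h2⟩

lemma swap_eq_second {Y Z C : Finset (Fin n)} (h0 : ¬(Y ⊆ C ∧ Disjoint Z C))
    (h1 : Z ⊆ C) (h2 : Disjoint Y C) :
    swapSide Y Z C = (C \ Z) ∪ Y := by
  rw [swapSide, if_neg h0, if_pos ⟨h1, h2⟩]

lemma swap_eq_fixed {Y Z C : Finset (Fin n)} (h0 : ¬(Y ⊆ C ∧ Disjoint Z C))
    (h1 : ¬(Z ⊆ C ∧ Disjoint Y C)) :
    swapSide Y Z C = C := by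
  rw [swapSide, if_neg h0, if_neg h1]

lemma swap_swap {Y Z C : Finset (Fin n)} (hYZ : Disjoint Y Z)
    (hY : Y.Nonempty) (hZ : Z.Nonempty) :
    swapSide Y Z (swapSide Y Z C) = C := by
  obtain ⟨y, hy⟩ := hY
  obtain ⟨z, hz⟩ := hZ
  by_cases b1 : Y ⊆ C ∧ Disjoint Z C
  · rw [swap_eq_first b1.1 b1.2]
    have h0 : ¬(Y ⊆ (C \ Y) ∪ Z ∧ Disjoint Z ((C \ Y) ∪ Z)) := by
      rintro ⟨h, -⟩
      have := h hy
      rw [Finset.mem_union, Finset.mem_sdiff] at this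
      rcases this with h' | h'
      · exact h'.2 hy
      · exact (Finset.disjoint_left.1 hYZ hy) h'
    rw [swap_eq_second h0 (fun x hx => Finset.mem_union_right _ hx) ?_]
    · ext u
      simp only [Finset.mem_union, Finset.mem_sdiff]
      constructor
      · rintro (⟨(⟨h1, h2⟩ | h1), h3⟩ | h1)
        · exact h1
        · exact absurd h1 h3
        · exact b1.1 h1
      · intro hu
        by_cases huY : u ∈ Y
        · exact Or.inr huY
        · exact Or.inl ⟨Or.inl ⟨hu, huY⟩, Finset.disjoint_right.1 b1.2 hu⟩
    · rw [Finset.disjoint_right]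
      intro u hu
      rw [Finset.mem_union, Finset.mem_sdiff] at hu
      rcases hu with h' | h'
      · exact h'.2
      · exact fun huY => (Finset.disjoint_left.1 hYZ huY) h'
  · by_cases b2 : Z ⊆ C ∧ Disjoint Y C
    · rw [swap_eq_second b1 b2.1 b2.2]
      have h1 : Y ⊆ (C \ Z) ∪ Y := fun x hx => Finset.mem_union_right _ hx
      have h2 : Disjoint Z ((C \ Z) ∪ Y) := by
        rw [Finset.disjoint_left]
        intro u hu h'
        rw [Finset.mem_union, Finset.mem_sdiff] at h'
        rcases h' with h' | h'
        · exact h'.2 hu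
        · exact (Finset.disjoint_left.1 hYZ h') hu
      rw [swap_eq_first h1 h2]
      ext u
      simp only [Finset.mem_union, Finset.mem_sdiff]
      constructor
      · rintro (⟨(⟨h3, h4⟩ | h3), h5⟩ | h3)
        · exact h3
        · exact absurd h3 h5
        · exact b2.1 h3
      · intro hu
        by_cases huZ : u ∈ Z
        · exact Or.inr huZ
        · exact Or.inl ⟨Or.inl ⟨hu, huZ⟩, Finset.disjoint_right.1 b2.2 hu⟩
    · rw [swap_eq_fixed b1 b2, swap_eq_fixed b1 b2]

lemma swap_compl {Y Z C : Finset (Fin n)} (hYZ : Disjoint Y Z)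
    (hY : Y.Nonempty) (hZ : Z.Nonempty) :
    swapSide Y Z Cᶜ = (swapSide Y Z C)ᶜ := by
  obtain ⟨y, hy⟩ := hY
  by_cases b1 : Y ⊆ C ∧ Disjoint Z C
  · rw [swap_eq_first b1.1 b1.2]
    have h0 : ¬(Y ⊆ Cᶜ ∧ Disjoint Z Cᶜ) := by
      rintro ⟨h, -⟩
      exact (Finset.mem_compl.1 (h hy)) (b1.1 hy)
    have h1 : Z ⊆ Cᶜ := fun x hx => Finset.mem_compl.2 (Finset.disjoint_left.1 b1.2 hx)
    have h2 : Disjoint Y Cᶜ := Finset.disjoint_left.2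
      (fun {x} hx h => (Finset.mem_compl.1 h) (b1.1 hx))
    rw [swap_eq_second h0 h1 h2]
    ext u
    simp only [Finset.mem_union, Finset.mem_sdiff, Finset.mem_compl]
    constructor
    · rintro (⟨h3, h4⟩ | h3)
      · push_neg
        exact ⟨fun h => absurd h h3, h4⟩
      · push_neg
        exact ⟨fun _ => h3, fun h => (Finset.disjoint_left.1 hYZ h3) h⟩
    · intro h
      push_neg at h
      by_cases huY : u ∈ Y
      · exact Or.inr huY
      · exact Or.inl ⟨fun hC => huY (h.1 hC), h.2⟩
  · by_cases b2 : Z ⊆ C ∧ Disjoint Y C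
    · rw [swap_eq_second b1 b2.1 b2.2]
      have h1 : Y ⊆ Cᶜ := fun x hx => Finset.mem_compl.2 (Finset.disjoint_left.1 b2.2 hx)
      have h2 : Disjoint Z Cᶜ := Finset.disjoint_left.2
        (fun {x} hx h => (Finset.mem_compl.1 h) (b2.1 hx))
      rw [swap_eq_first h1 h2]
      ext u
      simp only [Finset.mem_union, Finset.mem_sdiff, Finset.mem_compl]
      constructor
      · rintro (⟨h3, h4⟩ | h3)
        · push_neg
          exact ⟨fun h => absurd h h3, h4⟩
        · push_neg
          exact ⟨fun _ => h3, fun h => (Finset.disjoint_right.1 hYZ h3) h⟩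
      · intro h
        push_neg at h
        by_cases huZ : u ∈ Z
        · exact Or.inr huZ
        · exact Or.inl ⟨fun hC => huZ (h.1 hC), h.2⟩
    · have h0 : ¬(Y ⊆ Cᶜ ∧ Disjoint Z Cᶜ) := by
        rintro ⟨h, h'⟩
        apply b2
        constructor
        · intro x hx
          by_contra hxC
          exact (Finset.disjoint_left.1 h' hx) (Finset.mem_compl.2 hxC)
        · exact Finset.disjoint_left.2 (fun {x} hx hxC => (Finset.mem_compl.1 (h hx)) hxC)
      have h0' : ¬(Z ⊆ Cᶜ ∧ Disjoint Y Cᶜ) := by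
        rintro ⟨h, h'⟩
        apply b1
        constructor
        · intro x hx
          by_contra hxC
          exact (Finset.disjoint_left.1 h' hx) (Finset.mem_compl.2 hxC)
        · exact Finset.disjoint_left.2 (fun {x} hx hxC => (Finset.mem_compl.1 (h hx)) hxC)
      rw [swap_eq_fixed h0 h0', swap_eq_fixed b1 b2]

/-- The pointwise swap lemma, reducing membership of images to the two
classification hypotheses `alpha` and `gamma`. -/
lemma pointwise_swap {T T' : PhyloTree n} {A Z : Finset (Fin n)}
    (hA : A ∈ T.sides) (hA' : Aᶜ ∈ T'.sides)
    (hZ' : Z ∈ T'.sides) (hZA : Z ⊆ A) (hZnon : Z.Nonempty)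
    (presAc : ∀ C ∈ T.sides, C ⊆ Aᶜ → C ≠ Aᶜ → C ∈ T'.sides)
    (alpha : ∀ C ∈ T.sides, Z ⊆ C → C ⊆ A → (C \ Z) ∪ Aᶜ ∈ T'.sides)
    (gamma : ∀ C ∈ T.sides, C ⊆ A → ¬ Z ⊆ C → C ∈ T'.sides) :
    ∀ C ∈ T.sides, swapSide Aᶜ Z C ∈ T'.sides := by
  have hYnon : Aᶜ.Nonempty := compl_nonempty_of_mem hA
  obtain ⟨w, hw⟩ := hYnon
  obtain ⟨z, hz⟩ := hZnon
  have hdisj : Disjoint Aᶜ Z := Finset.disjoint_left.2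
    (fun {x} hx hxZ => (Finset.mem_compl.1 hx) (hZA hxZ))
  have core : ∀ C ∈ T.sides, (C ⊆ A ∨ C ⊆ Aᶜ) → swapSide Aᶜ Z C ∈ T'.sides := by
    intro C hC hsub
    rcases hsub with hsub | hsub
    · have hb1 : ¬(Aᶜ ⊆ C ∧ Disjoint Z C) := by
        rintro ⟨h, -⟩
        exact (Finset.mem_compl.1 hw) (hsub (h hw))
      by_cases hZC : Z ⊆ C
      · have hb2 : Disjoint Aᶜ C := Finset.disjoint_left.2
          (fun {x} hx hxC => (Finset.mem_compl.1 hx) (hsub hxC))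
        rw [swap_eq_second hb1 hZC hb2]
        exact alpha C hC hZC hsub
      · rw [swap_eq_fixed hb1 (fun h => hZC h.1)]
        exact gamma C hC hsub hZC
    · by_cases hCA : C = Aᶜ
      · subst hCA
        rw [swap_eq_first (Finset.Subset.refl _) hdisj.symm, Finset.sdiff_self,
          Finset.empty_union]
        exact hZ'
      · have hb1 : ¬(Aᶜ ⊆ C ∧ Disjoint Z C) := by
          rintro ⟨h, -⟩
          exact hCA (Finset.Subset.antisymm hsub h)
        have hb2 : ¬(Z ⊆ C ∧ Disjoint Aᶜ C) := by
          rintro ⟨h, -⟩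
          exact (Finset.mem_compl.1 (hsub (h hz))) (hZA hz)
        rw [swap_eq_fixed hb1 hb2]
        exact presAc C hC hsub hCA
  intro C hC
  rcases compat hC hA with h | h | h | h
  · exact core C hC (Or.inl h)
  · have : swapSide Aᶜ Z C = (swapSide Aᶜ Z Cᶜ)ᶜ := by
      rw [swap_compl hdisj ⟨w, hw⟩ ⟨z, hz⟩, compl_compl]
    rw [this]
    refine T'.compl_mem _ (core Cᶜ (T.compl_mem C hC) (Or.inr ?_))
    intro x hx
    exact Finset.mem_compl.2 (fun hxA => (Finset.mem_compl.1 hx) (h hxA))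
  · exact core C hC (Or.inr (fun x hx => Finset.mem_compl.2 (Finset.disjoint_left.1 h hx)))
  · have : swapSide Aᶜ Z C = (swapSide Aᶜ Z Cᶜ)ᶜ := by
      rw [swap_compl hdisj ⟨w, hw⟩ ⟨z, hz⟩, compl_compl]
    rw [this]
    refine T'.compl_mem _ (core Cᶜ (T.compl_mem C hC) (Or.inl ?_))
    intro x hx
    have := (Finset.eq_univ_iff_forall.1 h) x
    rw [Finset.mem_union] at this
    rcases this with h' | h'
    · exact absurd h' (Finset.mem_compl.1 hx)
    · exact h'

lemma image_eq_of_pointwise {T T' : PhyloTree n} {A Z : Finset (Fin n)}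
    (hAnonc : Aᶜ.Nonempty) (hZnon : Z.Nonempty) (hZA : Z ⊆ A)
    (fwd : ∀ C ∈ T.sides, swapSide Aᶜ Z C ∈ T'.sides)
    (bwd : ∀ D ∈ T'.sides, swapSide Aᶜ Z D ∈ T.sides) :
    T'.sides = T.sides.image (swapSide Aᶜ Z) := by
  have hdisj : Disjoint Aᶜ Z := Finset.disjoint_left.2
    (fun {x} hx hxZ => (Finset.mem_compl.1 hx) (hZA hxZ))
  ext D
  constructor
  · intro hD
    exact Finset.mem_image.2 ⟨swapSide Aᶜ Z D, bwd D hD, swap_swap hdisj hAnonc hZnon⟩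
  · intro hD
    obtain ⟨C, hC, rfl⟩ := Finset.mem_image.1 hD
    exact fwd C hC

/-- Flipped version: from `T.sides = image of T'.sides` conclude the other way. -/
lemma image_eq_symm {T T' : PhyloTree n} {A Z : Finset (Fin n)}
    (hAnonc : Aᶜ.Nonempty) (hZnon : Z.Nonempty) (hZA : Z ⊆ A)
    (h : T.sides = T'.sides.image (swapSide Aᶜ Z)) :
    T'.sides = T.sides.image (swapSide Aᶜ Z) := by
  have hdisj : Disjoint Aᶜ Z := Finset.disjoint_left.2
    (fun {x} hx hxZ => (Finset.mem_compl.1 hx) (hZA hxZ))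
  refine image_eq_of_pointwise hAnonc hZnon hZA ?_ ?_
  · intro C hC
    rw [h] at hC
    obtain ⟨D, hD, rfl⟩ := Finset.mem_image.1 hC
    rwa [swap_swap hdisj hAnonc hZnon]
  · intro D hD
    rw [h]
    exact Finset.mem_image.2 ⟨D, hD, rfl⟩

end PhyloTree
namespace PhyloTree

variable {n : ℕ}

lemma M_transfer {T T' : PhyloTree n} {A B : Finset (Fin n)} (s : Setup T T' A B)
    (nodead' : ∀ D ∈ T'.sides, B ⊆ D → D ⊆ A → D ≠ B → D ≠ A → D ∈ T.sides)
    (hM : A \ B ∈ T.sides) : A \ B ∈ T'.sides := by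
  obtain ⟨b, hb⟩ := nonempty_of_mem s.hB
  have hMnon : (A \ B).Nonempty := nonempty_of_mem hM
  have hMne : A \ B ≠ Finset.univ := ne_univ_of_mem hM
  have core : ∀ E ∈ T'.sides, E ⊆ A → SidesCompatible (A \ B) E := by
    intro E hE hEA
    rcases compat hE s.hB' with h | h | h | h
    · exact Or.inr (Or.inr (Or.inl (Finset.disjoint_right.2
        (fun {x} hx hxM => (Finset.mem_sdiff.1 hxM).2 (h hx)))))
    · by_cases hEB : E = B
      · subst hEB
        exact Or.inr (Or.inr (Or.inl (Finset.disjoint_left.2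
          (fun {x} hxM hx => (Finset.mem_sdiff.1 hxM).2 hx))))
      · by_cases hEA' : E = A
        · subst hEA'
          exact Or.inl (fun x hx => (Finset.mem_sdiff.1 hx).1)
        · exact compat hM (nodead' E hE h hEA hEB hEA')
    · exact Or.inr (Or.inl (fun x hx => Finset.mem_sdiff.2
        ⟨hEA hx, Finset.disjoint_left.1 h hx⟩))
    · exfalso
      apply ne_univ_of_mem s.hA
      rw [Finset.eq_univ_iff_forall]
      intro x
      have := (Finset.eq_univ_iff_forall.1 h) x
      rw [Finset.mem_union] at this
      rcases this with h' | h'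
      · exact hEA h'
      · exact s.hBA h'
  apply T'.maximal _ hMnon hMne
  intro E hE
  rcases compat hE s.hA' with h | h | h | h
  · exact core E hE h
  · exact Or.inl (fun x hx => h (Finset.mem_sdiff.1 hx).1)
  · exact Or.inr (Or.inr (Or.inl (Finset.disjoint_right.2
      (fun {x} hx hxM => Finset.disjoint_left.1 h hx (Finset.mem_sdiff.1 hxM).1))))
  · have hEc : Eᶜ ⊆ A := by
      intro x hx
      have := (Finset.eq_univ_iff_forall.1 h) x
      rw [Finset.mem_union] at this
      rcases this with h' | h'
      · exact absurd h' (Finset.mem_compl.1 hx)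
      · exact h'
    exact compat_compl_right (core Eᶜ (T'.compl_mem E hE) hEc)

lemma subset_of_nodead {T T' : PhyloTree n} {A B : Finset (Fin n)} (s : Setup T T' A B)
    (nd : ∀ C ∈ T.sides, B ⊆ C → C ⊆ A → C ≠ B → C ≠ A → C ∈ T'.sides)
    (nd' : ∀ D ∈ T'.sides, B ⊆ D → D ⊆ A → D ≠ B → D ≠ A → D ∈ T.sides) :
    T.sides ⊆ T'.sides := by
  have core : ∀ C ∈ T.sides, (C ⊆ A ∨ C ⊆ Aᶜ) → C ∈ T'.sides := by
    intro C hC hsub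
    rcases hsub with hsub | hsub
    · rcases compat hC s.hB with h | h | h | h
      · by_cases hCB : C = B
        · exact hCB ▸ s.hB'
        · exact pres_B s hC h hCB
      · by_cases hCB : C = B
        · exact hCB ▸ s.hB'
        · by_cases hCA : C = A
          · exact hCA ▸ s.hA'
          · exact nd C hC h hsub hCB hCA
      · have hCM : C ⊆ A \ B := fun x hx => Finset.mem_sdiff.2
          ⟨hsub hx, Finset.disjoint_left.1 h hx⟩
        by_cases hCeq : C = A \ B
        · exact hCeq ▸ M_transfer s nd' (hCeq ▸ hC)
        · exact stab_M s hC hCM hCeq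
      · exfalso
        apply ne_univ_of_mem s.hA
        rw [Finset.eq_univ_iff_forall]
        intro x
        have := (Finset.eq_univ_iff_forall.1 h) x
        rw [Finset.mem_union] at this
        rcases this with h' | h'
        · exact hsub h'
        · exact s.hBA h'
    · by_cases hCA : C = Aᶜ
      · exact hCA ▸ T'.compl_mem A s.hA'
      · exact pres_Ac s hC hsub hCA
  intro C hC
  rcases compat hC s.hA with h | h | h | h
  · exact core C hC (Or.inl h)
  · have : Cᶜ ∈ T'.sides := core Cᶜ (T.compl_mem C hC)
      (Or.inr (fun x hx => Finset.mem_compl.2 (fun hxA => (Finset.mem_compl.1 hx) (h hxA))))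
    simpa using T'.compl_mem _ this
  · exact core C hC (Or.inr (fun x hx => Finset.mem_compl.2 (Finset.disjoint_left.1 h hx)))
  · have hCc : Cᶜ ⊆ A := by
      intro x hx
      have := (Finset.eq_univ_iff_forall.1 h) x
      rw [Finset.mem_union] at this
      rcases this with h' | h'
      · exact absurd h' (Finset.mem_compl.1 hx)
      · exact h'
    have : Cᶜ ∈ T'.sides := core Cᶜ (T.compl_mem C hC) (Or.inl hCc)
    simpa using T'.compl_mem _ this

section identities

variable {A B G G1 G2 : Finset (Fin n)}

lemma id_sdiff_compl (hGA : G ⊆ A) : (A \ G) ∪ Aᶜ = Gᶜ := by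
  ext x
  simp only [Finset.mem_union, Finset.mem_sdiff, Finset.mem_compl]
  constructor
  · rintro (⟨_, h2⟩ | h1)
    · exact h2
    · exact fun hx => h1 (hGA hx)
  · intro h1
    by_cases hx : x ∈ A
    · exact Or.inl ⟨hx, h1⟩
    · exact Or.inr hx

lemma id_M_piece (hGM : G1 ⊆ A \ B) (hBA : B ⊆ A) :
    ((A \ B) \ G1) ∪ Aᶜ = (B ∪ G1)ᶜ := by
  ext x
  simp only [Finset.mem_union, Finset.mem_sdiff, Finset.mem_compl, Finset.mem_union]
  constructor
  · rintro (⟨⟨h1, h2⟩, h3⟩ | h1)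
    · push_neg
      exact ⟨h2, h3⟩
    · push_neg
      exact ⟨fun h => h1 (hBA h), fun h => h1 (Finset.mem_sdiff.1 (hGM h)).1⟩
  · intro h
    push_neg at h
    by_cases hx : x ∈ A
    · exact Or.inl ⟨⟨hx, h.1⟩, h.2⟩
    · exact Or.inr hx

lemma id_union_compl (hBA : B ⊆ A) : (A \ B) ∪ Aᶜ = Bᶜ := by
  ext x
  simp only [Finset.mem_union, Finset.mem_sdiff, Finset.mem_compl]
  constructor
  · rintro (⟨_, h2⟩ | h1)
    · exact h2
    · exact fun hx => h1 (hBA hx)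
  · intro h1
    by_cases hx : x ∈ A
    · exact Or.inl ⟨hx, h1⟩
    · exact Or.inr hx

lemma id_B_compl (hBA : B ⊆ A) : B ∪ Aᶜ = (A \ B)ᶜ := by
  ext x
  simp only [Finset.mem_union, Finset.mem_compl, Finset.mem_sdiff]
  constructor
  · rintro (h | h)
    · push_neg; exact fun _ => h
    · push_neg; exact fun hA => absurd hA h
  · intro h
    push_neg at h
    by_cases hx : x ∈ A
    · exact Or.inl (h hx)
    · exact Or.inr hx

lemma id_other_piece (hdisj : Disjoint G1 G2) (hU : G1 ∪ G2 = A \ B) (hBA : B ⊆ A) :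
    G2 ∪ Aᶜ = (B ∪ G1)ᶜ := by
  have hG1 : G1 ⊆ A \ B := fun x hx => by rw [← hU]; exact Finset.mem_union_left _ hx
  have hG2 : G2 ⊆ A \ B := fun x hx => by rw [← hU]; exact Finset.mem_union_right _ hx
  ext x
  simp only [Finset.mem_union, Finset.mem_compl, Finset.mem_union]
  constructor
  · rintro (h | h)
    · push_neg
      refine ⟨(Finset.mem_sdiff.1 (hG2 h)).2, fun hx => (Finset.disjoint_right.1 hdisj h) hx⟩
    · push_neg
      exact ⟨fun hx => h (hBA hx), fun hx => h (Finset.mem_sdiff.1 (hG1 hx)).1⟩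
  · intro h
    push_neg at h
    by_cases hx : x ∈ A
    · have : x ∈ G1 ∪ G2 := by rw [hU, Finset.mem_sdiff]; exact ⟨hx, h.1⟩
      rw [Finset.mem_union] at this
      rcases this with h' | h'
      · exact absurd h' h.2
      · exact Or.inl h'
    · exact Or.inr hx

lemma id_sdiff_left (hdisj : ∀ x ∈ B, x ∉ G1) : (B ∪ G1) \ G1 = B := by
  ext x
  simp only [Finset.mem_sdiff, Finset.mem_union]
  constructor
  · rintro ⟨h | h, h2⟩
    · exact h
    · exact absurd h h2
  · intro h
    exact ⟨Or.inl h, hdisj x h⟩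

end identities

end PhyloTree
namespace PhyloTree
variable {n : ℕ}
lemma id_sdiff_left' {B G : Finset (Fin n)} (h : ∀ x ∈ B, x ∉ G) : (B ∪ G) \ B = G := by
  ext x
  simp only [Finset.mem_sdiff, Finset.mem_union]
  constructor
  · rintro ⟨h1 | h1, h2⟩
    · exact absurd h1 h2
    · exact h1
  · intro hx
    exact ⟨Or.inr hx, fun hB => h x hB hx⟩
end PhyloTree
namespace PhyloTree

variable {n : ℕ}

/-- Case A/B: `D = B ∪ G1` is a strictly-middle side of `T'` absent from `T`, and `T`
has no dying strictly-middle sides.  Then `T'` is the swap of `Aᶜ` with `G1 = D \ B`. -/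
lemma caseAB {T T' : PhyloTree n} {A B D : Finset (Fin n)} (s : Setup T T' A B)
    (hD' : D ∈ T'.sides) (hBD : B ⊆ D) (hDA : D ⊆ A) (hDneB : D ≠ B) (hDneA : D ≠ A)
    (hDnot : D ∉ T.sides)
    (nodead : ∀ C ∈ T.sides, B ⊆ C → C ⊆ A → C ≠ B → C ≠ A → C ∈ T'.sides) :
    T'.sides = T.sides.image (swapSide Aᶜ (D \ B)) ∧
      D \ B ∈ T.sides ∧ D \ B ∈ T'.sides := by
  obtain ⟨⟨hG1', hG1⟩, ⟨hG2', hG2⟩⟩ := mid_death s.symm hD' hBD hDA hDneB hDneA hDnot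
  set G1 := D \ B with hG1def
  set G2 := A \ D with hG2def
  have hBnon : B.Nonempty := nonempty_of_mem s.hB
  have hG1non : G1.Nonempty := nonempty_of_mem hG1
  have hG2non : G2.Nonempty := nonempty_of_mem hG2
  obtain ⟨g1, hg1⟩ := nonempty_of_mem hG1
  have hg1A : g1 ∈ A := hDA (Finset.mem_sdiff.1 hg1).1
  have hg1B : g1 ∉ B := (Finset.mem_sdiff.1 hg1).2
  have hdisjG : Disjoint G1 G2 := Finset.disjoint_left.2
    (fun {x} hx hx2 => (Finset.mem_sdiff.1 hx2).2 (Finset.mem_sdiff.1 hx).1)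
  have hU : G1 ∪ G2 = A \ B := by
    ext x
    simp only [Finset.mem_union, Finset.mem_sdiff, hG1def, hG2def]
    constructor
    · rintro (⟨h1, h2⟩ | ⟨h1, h2⟩)
      · exact ⟨hDA h1, h2⟩
      · exact ⟨h1, fun hB1 => h2 (hBD hB1)⟩
    · rintro ⟨h1, h2⟩
      by_cases hxD : x ∈ D
      · exact Or.inl ⟨hxD, h2⟩
      · exact Or.inr ⟨h1, hxD⟩
  have hDeq : D = B ∪ G1 := by
    ext x
    simp only [Finset.mem_union, Finset.mem_sdiff, hG1def]
    constructor
    · intro h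
      by_cases hxB : x ∈ B
      · exact Or.inl hxB
      · exact Or.inr ⟨h, hxB⟩
    · rintro (h | ⟨h, -⟩)
      · exact hBD h
      · exact h
  have hG1A : G1 ⊆ A := fun x hx => hDA (Finset.mem_sdiff.1 hx).1
  have hG1M : G1 ⊆ A \ B := fun x hx => by
    rw [← hU]; exact Finset.mem_union_left _ hx
  have hDmem' : B ∪ G1 ∈ T'.sides := hDeq ▸ hD'
  have nostrictT : ∀ C ∈ T.sides, B ⊆ C → C ⊆ A → C = B ∨ C = A := by
    intro C hC hBC hCA
    by_cases hCB : C = B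
    · exact Or.inl hCB
    by_cases hCA' : C = A
    · exact Or.inr hCA'
    exfalso
    have hC' : C ∈ T'.sides := nodead C hC hBC hCA hCB hCA'
    rcases mid_classify s.hA' s.hB' s.hBA hG1' hG2' hdisjG hU hC' hBC hCA hCB hCA' with h | h
    · rw [← hDeq] at h
      exact hDnot (h ▸ hC)
    · exact not_both_mid s.hA' s.hBA hBnon hG1non hG2non hdisjG hU hDmem' (h ▸ hC')
  have hM : A \ B ∈ T.sides := gap_mem s.hA s.hB s.hBA s.hBneA nostrictT
  have hMnot' : A \ B ∉ T'.sides :=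
    M_not_mem_of_mid s.hA' s.hBA hBnon hG1non hG2non hdisjG hU hDmem'
  have strictT' : ∀ C ∈ T'.sides, B ⊆ C → C ⊆ A → C = B ∨ C = A ∨ C = D := by
    intro C hC hBC hCA
    by_cases hCB : C = B
    · exact Or.inl hCB
    by_cases hCA' : C = A
    · exact Or.inr (Or.inl hCA')
    rcases mid_classify s.hA' s.hB' s.hBA hG1' hG2' hdisjG hU hC hBC hCA hCB hCA' with h | h
    · exact Or.inr (Or.inr (h.trans hDeq.symm))
    · exact absurd (h ▸ hC) (fun hmem =>
        not_both_mid s.hA' s.hBA hBnon hG1non hG2non hdisjG hU hDmem' hmem)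
  -- forward pointwise lemma : T → T'
  have alphaF : ∀ C ∈ T.sides, G1 ⊆ C → C ⊆ A → (C \ G1) ∪ Aᶜ ∈ T'.sides := by
    intro C hC hG1C hCA
    rcases compat hC s.hB with h | h | h | h
    · exact absurd (h (hG1C hg1)) hg1B
    · rcases nostrictT C hC h hCA with rfl | rfl
      · exact absurd (hG1C hg1) hg1B
      · rw [id_sdiff_compl hG1A]
        exact T'.compl_mem _ hG1'
    · have hCM : C ⊆ A \ B := fun x hx => Finset.mem_sdiff.2
        ⟨hCA hx, Finset.disjoint_left.1 h hx⟩
      rcases compat hC hG2 with h2 | h2 | h2 | h2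
      · exact absurd (h2 (hG1C hg1)) (Finset.disjoint_left.1 hdisjG hg1)
      · have hCeq : C = A \ B := by
          refine Finset.Subset.antisymm hCM (fun x hx => ?_)
          have : x ∈ G1 ∪ G2 := hU ▸ hx
          rw [Finset.mem_union] at this
          rcases this with h' | h'
          · exact hG1C h'
          · exact h2 h'
        rw [hCeq, id_M_piece hG1M s.hBA]
        exact T'.compl_mem _ hDmem'
      · have hCeq : C = G1 := by
          refine Finset.Subset.antisymm (fun x hx => ?_) hG1C
          have : x ∈ G1 ∪ G2 := hU ▸ hCM hx
          rw [Finset.mem_union] at this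
          rcases this with h' | h'
          · exact h'
          · exact absurd h' (Finset.disjoint_left.1 h2 hx)
        rw [hCeq, Finset.sdiff_self, Finset.empty_union]
        exact T'.compl_mem _ s.hA'
      · exfalso
        apply ne_univ_of_mem s.hA
        rw [Finset.eq_univ_iff_forall]
        intro x
        have := (Finset.eq_univ_iff_forall.1 h2) x
        rw [Finset.mem_union] at this
        rcases this with h' | h'
        · exact hCA h'
        · exact (Finset.mem_sdiff.1 h').1
    · exfalso
      apply ne_univ_of_mem s.hA
      rw [Finset.eq_univ_iff_forall]
      intro x
      have := (Finset.eq_univ_iff_forall.1 h) x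
      rw [Finset.mem_union] at this
      rcases this with h' | h'
      · exact hCA h'
      · exact s.hBA h'
  have gammaF : ∀ C ∈ T.sides, C ⊆ A → ¬ G1 ⊆ C → C ∈ T'.sides := by
    intro C hC hCA hnG
    rcases compat hC s.hB with h | h | h | h
    · by_cases hCB : C = B
      · exact hCB ▸ s.hB'
      · exact pres_B s hC h hCB
    · rcases nostrictT C hC h hCA with rfl | rfl
      · exact s.hB'
      · exact s.hA'
    · have hCM : C ⊆ A \ B := fun x hx => Finset.mem_sdiff.2
        ⟨hCA hx, Finset.disjoint_left.1 h hx⟩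
      have hCne : C ≠ A \ B := by
        intro hCeq
        exact hnG (hCeq ▸ hG1M)
      exact stab_M s hC hCM hCne
    · exfalso
      apply ne_univ_of_mem s.hA
      rw [Finset.eq_univ_iff_forall]
      intro x
      have := (Finset.eq_univ_iff_forall.1 h) x
      rw [Finset.mem_union] at this
      rcases this with h' | h'
      · exact hCA h'
      · exact s.hBA h'
  -- backward pointwise lemma : T' → T
  have alphaB : ∀ C ∈ T'.sides, G1 ⊆ C → C ⊆ A → (C \ G1) ∪ Aᶜ ∈ T.sides := by
    intro C hC hG1C hCA
    rcases compat hC s.hB' with h | h | h | h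
    · exact absurd (h (hG1C hg1)) hg1B
    · rcases strictT' C hC h hCA with rfl | rfl | rfl
      · exact absurd (hG1C hg1) hg1B
      · rw [id_sdiff_compl hG1A]
        exact T.compl_mem _ hG1
      · rw [hDeq, id_sdiff_left (fun x hx hx2 => (Finset.mem_sdiff.1 hx2).2 hx),
          id_B_compl s.hBA]
        exact T.compl_mem _ hM
    · have hCM : C ⊆ A \ B := fun x hx => Finset.mem_sdiff.2
        ⟨hCA hx, Finset.disjoint_left.1 h hx⟩
      rcases compat hC hG2' with h2 | h2 | h2 | h2
      · exact absurd (h2 (hG1C hg1)) (Finset.disjoint_left.1 hdisjG hg1)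
      · exfalso
        apply hMnot'
        have hCeq : C = A \ B := by
          refine Finset.Subset.antisymm hCM (fun x hx => ?_)
          have : x ∈ G1 ∪ G2 := hU ▸ hx
          rw [Finset.mem_union] at this
          rcases this with h' | h'
          · exact hG1C h'
          · exact h2 h'
        exact hCeq ▸ hC
      · have hCeq : C = G1 := by
          refine Finset.Subset.antisymm (fun x hx => ?_) hG1C
          have : x ∈ G1 ∪ G2 := hU ▸ hCM hx
          rw [Finset.mem_union] at this
          rcases this with h' | h'
          · exact h'
          · exact absurd h' (Finset.disjoint_left.1 h2 hx)
        rw [hCeq, Finset.sdiff_self, Finset.empty_union]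
        exact T.compl_mem _ s.hA
      · exfalso
        apply ne_univ_of_mem s.hA'
        rw [Finset.eq_univ_iff_forall]
        intro x
        have := (Finset.eq_univ_iff_forall.1 h2) x
        rw [Finset.mem_union] at this
        rcases this with h' | h'
        · exact hCA h'
        · exact (Finset.mem_sdiff.1 h').1
    · exfalso
      apply ne_univ_of_mem s.hA'
      rw [Finset.eq_univ_iff_forall]
      intro x
      have := (Finset.eq_univ_iff_forall.1 h) x
      rw [Finset.mem_union] at this
      rcases this with h' | h'
      · exact hCA h'
      · exact s.hBA h'
  have gammaB : ∀ C ∈ T'.sides, C ⊆ A → ¬ G1 ⊆ C → C ∈ T.sides := by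
    intro C hC hCA hnG
    rcases compat hC s.hB' with h | h | h | h
    · by_cases hCB : C = B
      · exact hCB ▸ s.hB
      · exact pres_B s.symm hC h hCB
    · rcases strictT' C hC h hCA with rfl | rfl | rfl
      · exact s.hB
      · exact s.hA
      · exact absurd (fun x hx => (Finset.mem_sdiff.1 hx).1) hnG
    · have hCM : C ⊆ A \ B := fun x hx => Finset.mem_sdiff.2
        ⟨hCA hx, Finset.disjoint_left.1 h hx⟩
      have hCne : C ≠ A \ B := fun hCeq => hMnot' (hCeq ▸ hC)
      exact stab_M s.symm hC hCM hCne
    · exfalso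
      apply ne_univ_of_mem s.hA'
      rw [Finset.eq_univ_iff_forall]
      intro x
      have := (Finset.eq_univ_iff_forall.1 h) x
      rw [Finset.mem_union] at this
      rcases this with h' | h'
      · exact hCA h'
      · exact s.hBA h'
  have fwd := pointwise_swap s.hA (T'.compl_mem A s.hA') hG1' hG1A
    (nonempty_of_mem hG1) (fun C hC h1 h2 => pres_Ac s hC h1 h2) alphaF gammaF
  have bwd := pointwise_swap s.hA' (T.compl_mem A s.hA) hG1 hG1A
    (nonempty_of_mem hG1) (fun C hC h1 h2 => pres_Ac s.symm hC h1 h2) alphaB gammaB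
  exact ⟨image_eq_of_pointwise (compl_nonempty_of_mem s.hA) (nonempty_of_mem hG1)
    hG1A fwd bwd, hG1, hG1'⟩

end PhyloTree
namespace PhyloTree

variable {n : ℕ}

/-- Case C: each tree has a strictly-middle side absent from the other.  Then `T'` is the
swap of `Aᶜ` with `B`. -/
lemma caseC {T T' : PhyloTree n} {A B D D' : Finset (Fin n)} (s : Setup T T' A B)
    (hD : D ∈ T.sides) (hBD : B ⊆ D) (hDA : D ⊆ A) (hDneB : D ≠ B) (hDneA : D ≠ A)
    (hDnot : D ∉ T'.sides)
    (hD' : D' ∈ T'.sides) (hBD' : B ⊆ D') (hD'A : D' ⊆ A) (hD'neB : D' ≠ B)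
    (hD'neA : D' ≠ A) (hD'not : D' ∉ T.sides) :
    T'.sides = T.sides.image (swapSide Aᶜ B) := by
  obtain ⟨⟨hG1', hG1⟩, ⟨hG2', hG2⟩⟩ := mid_death s.symm hD' hBD' hD'A hD'neB hD'neA hD'not
  set G1 := D' \ B with hG1def
  set G2 := A \ D' with hG2def
  have hBnon : B.Nonempty := nonempty_of_mem s.hB
  have hG1non : G1.Nonempty := nonempty_of_mem hG1
  have hG2non : G2.Nonempty := nonempty_of_mem hG2
  have hdisjG : Disjoint G1 G2 := Finset.disjoint_left.2
    (fun {x} hx hx2 => (Finset.mem_sdiff.1 hx2).2 (Finset.mem_sdiff.1 hx).1)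
  have hU : G1 ∪ G2 = A \ B := by
    ext x
    simp only [Finset.mem_union, Finset.mem_sdiff, hG1def, hG2def]
    constructor
    · rintro (⟨h1, h2⟩ | ⟨h1, h2⟩)
      · exact ⟨hD'A h1, h2⟩
      · exact ⟨h1, fun hB1 => h2 (hBD' hB1)⟩
    · rintro ⟨h1, h2⟩
      by_cases hxD : x ∈ D'
      · exact Or.inl ⟨hxD, h2⟩
      · exact Or.inr ⟨h1, hxD⟩
  have hD'eq : D' = B ∪ G1 := by
    ext x
    simp only [Finset.mem_union, Finset.mem_sdiff, hG1def]
    constructor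
    · intro h
      by_cases hxB : x ∈ B
      · exact Or.inl hxB
      · exact Or.inr ⟨h, hxB⟩
    · rintro (h | ⟨h, -⟩)
      · exact hBD' h
      · exact h
  have hG1A : G1 ⊆ A := fun x hx => hD'A (Finset.mem_sdiff.1 hx).1
  have hG2A : G2 ⊆ A := fun x hx => (Finset.mem_sdiff.1 hx).1
  have hG1M : G1 ⊆ A \ B := fun x hx => by
    rw [← hU]; exact Finset.mem_union_left _ hx
  have hG2M : G2 ⊆ A \ B := fun x hx => by
    rw [← hU]; exact Finset.mem_union_right _ hx
  have hU2 : G2 ∪ G1 = A \ B := by rw [Finset.union_comm]; exact hU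
  have hD'mem' : B ∪ G1 ∈ T'.sides := hD'eq ▸ hD'
  have hDeq : D = B ∪ G2 := by
    rcases mid_classify s.hA s.hB s.hBA hG1 hG2 hdisjG hU hD hBD hDA hDneB hDneA with h | h
    · exfalso
      rw [← hD'eq] at h
      exact hD'not (h ▸ hD)
    · exact h
  have hDmem : B ∪ G2 ∈ T.sides := hDeq ▸ hD
  have strictT : ∀ C ∈ T.sides, B ⊆ C → C ⊆ A → C = B ∨ C = A ∨ C = D := by
    intro C hC hBC hCA
    by_cases hCB : C = B
    · exact Or.inl hCB
    by_cases hCA' : C = A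
    · exact Or.inr (Or.inl hCA')
    rcases mid_classify s.hA s.hB s.hBA hG1 hG2 hdisjG hU hC hBC hCA hCB hCA' with h | h
    · rw [← hD'eq] at h
      exact absurd (h ▸ hC) hD'not
    · exact Or.inr (Or.inr (h.trans hDeq.symm))
  have strictT' : ∀ C ∈ T'.sides, B ⊆ C → C ⊆ A → C = B ∨ C = A ∨ C = D' := by
    intro C hC hBC hCA
    by_cases hCB : C = B
    · exact Or.inl hCB
    by_cases hCA' : C = A
    · exact Or.inr (Or.inl hCA')
    rcases mid_classify s.hA' s.hB' s.hBA hG1' hG2' hdisjG hU hC hBC hCA hCB hCA' with h | h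
    · exact Or.inr (Or.inr (h.trans hD'eq.symm))
    · rw [← hDeq] at h
      exact absurd (h ▸ hC) hDnot
  have hMnotT : A \ B ∉ T.sides :=
    M_not_mem_of_mid s.hA s.hBA hBnon hG2non hG1non hdisjG.symm hU2 hDmem
  have hMnotT' : A \ B ∉ T'.sides :=
    M_not_mem_of_mid s.hA' s.hBA hBnon hG1non hG2non hdisjG hU hD'mem'
  have hdisjBG1 : ∀ x ∈ B, x ∉ G1 := fun x hx hx2 => (Finset.mem_sdiff.1 (hG1M hx2)).2 hx
  have hdisjBG2 : ∀ x ∈ B, x ∉ G2 := fun x hx hx2 => (Finset.mem_sdiff.1 (hG2M hx2)).2 hx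
  have alphaF : ∀ C ∈ T.sides, B ⊆ C → C ⊆ A → (C \ B) ∪ Aᶜ ∈ T'.sides := by
    intro C hC hBC hCA
    rcases strictT C hC hBC hCA with rfl | rfl | rfl
    · rw [Finset.sdiff_self, Finset.empty_union]
      exact T'.compl_mem _ s.hA'
    · rw [id_union_compl s.hBA]
      exact T'.compl_mem _ s.hB'
    · rw [hDeq, id_sdiff_left' hdisjBG2, id_other_piece hdisjG hU s.hBA]
      exact T'.compl_mem _ hD'mem'
  have gammaF : ∀ C ∈ T.sides, C ⊆ A → ¬ B ⊆ C → C ∈ T'.sides := by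
    intro C hC hCA hnB
    rcases compat hC s.hB with h | h | h | h
    · have hCB : C ≠ B := fun hCeq => hnB (hCeq ▸ Finset.Subset.refl B)
      exact pres_B s hC h hCB
    · exact absurd h hnB
    · have hCM : C ⊆ A \ B := fun x hx => Finset.mem_sdiff.2
        ⟨hCA hx, Finset.disjoint_left.1 h hx⟩
      have hCne : C ≠ A \ B := fun hCeq => hMnotT (hCeq ▸ hC)
      exact stab_M s hC hCM hCne
    · exfalso
      apply ne_univ_of_mem s.hA
      rw [Finset.eq_univ_iff_forall]
      intro x
      have := (Finset.eq_univ_iff_forall.1 h) x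
      rw [Finset.mem_union] at this
      rcases this with h' | h'
      · exact hCA h'
      · exact s.hBA h'
  have alphaB : ∀ C ∈ T'.sides, B ⊆ C → C ⊆ A → (C \ B) ∪ Aᶜ ∈ T.sides := by
    intro C hC hBC hCA
    rcases strictT' C hC hBC hCA with rfl | rfl | rfl
    · rw [Finset.sdiff_self, Finset.empty_union]
      exact T.compl_mem _ s.hA
    · rw [id_union_compl s.hBA]
      exact T.compl_mem _ s.hB
    · rw [hD'eq, id_sdiff_left' hdisjBG1, id_other_piece hdisjG.symm hU2 s.hBA]
      exact T.compl_mem _ hDmem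
  have gammaB : ∀ C ∈ T'.sides, C ⊆ A → ¬ B ⊆ C → C ∈ T.sides := by
    intro C hC hCA hnB
    rcases compat hC s.hB' with h | h | h | h
    · have hCB : C ≠ B := fun hCeq => hnB (hCeq ▸ Finset.Subset.refl B)
      exact pres_B s.symm hC h hCB
    · exact absurd h hnB
    · have hCM : C ⊆ A \ B := fun x hx => Finset.mem_sdiff.2
        ⟨hCA hx, Finset.disjoint_left.1 h hx⟩
      have hCne : C ≠ A \ B := fun hCeq => hMnotT' (hCeq ▸ hC)
      exact stab_M s.symm hC hCM hCne
    · exfalso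
      apply ne_univ_of_mem s.hA'
      rw [Finset.eq_univ_iff_forall]
      intro x
      have := (Finset.eq_univ_iff_forall.1 h) x
      rw [Finset.mem_union] at this
      rcases this with h' | h'
      · exact hCA h'
      · exact s.hBA h'
  have fwd := pointwise_swap s.hA (T'.compl_mem A s.hA') s.hB' s.hBA hBnon
    (fun C hC h1 h2 => pres_Ac s hC h1 h2) alphaF gammaF
  have bwd := pointwise_swap s.hA' (T.compl_mem A s.hA) s.hB s.hBA hBnon
    (fun C hC h1 h2 => pres_Ac s.symm hC h1 h2) alphaB gammaB
  exact image_eq_of_pointwise (compl_nonempty_of_mem s.hA) hBnon s.hBA fwd bwd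

/-- The master lemma: under `Setup`, if the trees differ, `T'` is obtained from `T` by
swapping `Aᶜ` with a side `Z ⊆ A`. -/
lemma master {T T' : PhyloTree n} {A B : Finset (Fin n)} (s : Setup T T' A B)
    (hTT' : T.sides ≠ T'.sides) :
    ∃ Z ∈ T.sides, Z.Nonempty ∧ Z ⊆ A ∧ T'.sides = T.sides.image (swapSide Aᶜ Z) := by
  by_cases hdead : ∃ C, C ∈ T.sides ∧ B ⊆ C ∧ C ⊆ A ∧ C ≠ B ∧ C ≠ A ∧ C ∉ T'.sides
  · by_cases hdead' : ∃ D, D ∈ T'.sides ∧ B ⊆ D ∧ D ⊆ A ∧ D ≠ B ∧ D ≠ A ∧ D ∉ T.sides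
    · obtain ⟨C, hC, h1, h2, h3, h4, h5⟩ := hdead
      obtain ⟨D, hD, k1, k2, k3, k4, k5⟩ := hdead'
      exact ⟨B, s.hB, nonempty_of_mem s.hB, s.hBA,
        caseC s hC h1 h2 h3 h4 h5 hD k1 k2 k3 k4 k5⟩
    · push_neg at hdead'
      obtain ⟨C, hC, h1, h2, h3, h4, h5⟩ := hdead
      obtain ⟨himg, hZ', hZ⟩ := caseAB s.symm hC h1 h2 h3 h4 h5 hdead'
      -- himg : T.sides = T'.sides.image (swapSide Aᶜ (C \ B))
      have hZA : C \ B ⊆ A := fun x hx => h2 (Finset.mem_sdiff.1 hx).1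
      exact ⟨C \ B, hZ, nonempty_of_mem hZ, hZA,
        image_eq_symm (compl_nonempty_of_mem s.hA) (nonempty_of_mem hZ) hZA himg⟩
  · push_neg at hdead
    by_cases hdead' : ∃ D, D ∈ T'.sides ∧ B ⊆ D ∧ D ⊆ A ∧ D ≠ B ∧ D ≠ A ∧ D ∉ T.sides
    · obtain ⟨D, hD, k1, k2, k3, k4, k5⟩ := hdead'
      obtain ⟨himg, hZ, hZ'⟩ := caseAB s hD k1 k2 k3 k4 k5 hdead
      have hZA : D \ B ⊆ A := fun x hx => k2 (Finset.mem_sdiff.1 hx).1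
      exact ⟨D \ B, hZ, nonempty_of_mem hZ, hZA, himg⟩
    · push_neg at hdead'
      exact absurd (Finset.Subset.antisymm (subset_of_nodead s hdead hdead')
        (subset_of_nodead s.symm hdead' hdead)) hTT'

end PhyloTree
namespace PhyloTree

variable {n : ℕ}

lemma spr_subset {T T' : PhyloTree n} {A B : Finset (Fin n)} (s : Setup T T' A B)
    {x m : Fin n} (hx : x ∈ B) (hmA : m ∈ A) (hmx : m ≠ x) :
    T.restrict (insert x Aᶜ) ⊆ T'.restrict (insert x Aᶜ) := by
  set X : Finset (Fin n) := insert x Aᶜ with hXdef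
  have hxX : x ∈ X := Finset.mem_insert_self _ _
  have hAcX : Aᶜ ⊆ X := Finset.subset_insert _ _
  have hmX : m ∉ X := by
    rw [hXdef, Finset.mem_insert]
    rintro (h | h)
    · exact hmx h
    · exact (Finset.mem_compl.1 h) hmA
  intro DX hDX
  obtain ⟨C, hC, rfl⟩ := Finset.mem_image.1 hDX
  rcases compat hC s.hA with h | h | h | h
  · -- C ⊆ A
    by_cases hxC : x ∈ C
    · refine Finset.mem_image.2 ⟨{x}, T'.singleton_mem x, ?_⟩
      ext y
      simp only [Finset.mem_inter, Finset.mem_singleton]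
      constructor
      · rintro ⟨rfl, -⟩
        exact ⟨hxC, hxX⟩
      · rintro ⟨hyC, hyX⟩
        rw [hXdef, Finset.mem_insert] at hyX
        rcases hyX with rfl | hyX
        · exact ⟨rfl, hxX⟩
        · exact absurd (h hyC) (Finset.mem_compl.1 hyX)
    · refine Finset.mem_image.2 ⟨{m}, T'.singleton_mem m, ?_⟩
      ext y
      simp only [Finset.mem_inter, Finset.mem_singleton]
      constructor
      · rintro ⟨rfl, hyX⟩
        exact absurd hyX hmX
      · rintro ⟨hyC, hyX⟩
        rw [hXdef, Finset.mem_insert] at hyX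
        rcases hyX with rfl | hyX
        · exact absurd hyC hxC
        · exact absurd (h hyC) (Finset.mem_compl.1 hyX)
  · -- A ⊆ C
    by_cases hCA : C = A
    · exact Finset.mem_image.2 ⟨C, by rw [hCA]; exact s.hA', rfl⟩
    · have hCc : Cᶜ ⊆ Aᶜ := fun y hy => Finset.mem_compl.2
        (fun hyA => (Finset.mem_compl.1 hy) (h hyA))
      have hCcne : Cᶜ ≠ Aᶜ := by
        intro h'
        apply hCA
        have := congrArg (·ᶜ) h'
        simpa using this
      have : Cᶜ ∈ T'.sides := pres_Ac s (T.compl_mem C hC) hCc hCcne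
      exact Finset.mem_image.2 ⟨C, by simpa using T'.compl_mem _ this, rfl⟩
  · -- Disjoint C A, i.e. C ⊆ Aᶜ
    have hsub : C ⊆ Aᶜ := fun y hy => Finset.mem_compl.2 (Finset.disjoint_left.1 h hy)
    by_cases hCA : C = Aᶜ
    · exact Finset.mem_image.2 ⟨C, hCA ▸ T'.compl_mem A s.hA', rfl⟩
    · exact Finset.mem_image.2 ⟨C, pres_Ac s hC hsub hCA, rfl⟩
  · -- C ∪ A = univ, i.e. Aᶜ ⊆ C
    have hAcC : Aᶜ ⊆ C := by
      intro y hy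
      have := (Finset.eq_univ_iff_forall.1 h) y
      rw [Finset.mem_union] at this
      rcases this with h' | h'
      · exact h'
      · exact absurd h' (Finset.mem_compl.1 hy)
    by_cases hxC : x ∈ C
    · refine Finset.mem_image.2 ⟨{m}ᶜ, T'.compl_mem _ (T'.singleton_mem m), ?_⟩
      have h1 : {m}ᶜ ∩ X = X := Finset.inter_eq_right.2
        (fun y hy => Finset.mem_compl.2 (fun h' => hmX (Finset.mem_singleton.1 h' ▸ hy)))
      have h2 : C ∩ X = X := Finset.inter_eq_right.2 (fun y hy => by
        rw [hXdef, Finset.mem_insert] at hy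
        rcases hy with rfl | hy
        · exact hxC
        · exact hAcC hy)
      rw [h1, h2]
    · refine Finset.mem_image.2 ⟨Aᶜ, T'.compl_mem A s.hA', ?_⟩
      have h1 : Aᶜ ∩ X = Aᶜ := Finset.inter_eq_left.2 hAcX
      have h2 : C ∩ X = Aᶜ := by
        ext y
        simp only [Finset.mem_inter]
        constructor
        · rintro ⟨hyC, hyX⟩
          rw [hXdef, Finset.mem_insert] at hyX
          rcases hyX with rfl | hyX
          · exact absurd hyC hxC
          · exact hyX
        · intro hy
          exact ⟨hAcC hy, hAcX hy⟩
      rw [h1, h2]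

lemma spr_restrict {T T' : PhyloTree n} {A B : Finset (Fin n)} (s : Setup T T' A B)
    {x : Fin n} (hx : x ∈ B) :
    T.restrict (insert x Aᶜ) = T'.restrict (insert x Aᶜ) := by
  obtain ⟨m, hm⟩ := s.M_nonempty
  rw [Finset.mem_sdiff] at hm
  have hmx : m ≠ x := fun h => hm.2 (h ▸ hx)
  exact Finset.Subset.antisymm (spr_subset s hx hm.1 hmx) (spr_subset s.symm hx hm.1 hmx)

lemma assemble {T : PhyloTree n} {θ : Move n} {A B : Finset (Fin n)}
    (hθ : θ ∈ T.OTBR) (s : Setup T θ.2 A B) (h1 : θ.1 = Sym2.mk A Aᶜ) :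
    θ ∈ T.ONNI := by
  have hTT' : T.sides ≠ θ.2.sides := fun h => hθ.1 (ext_of_sides h.symm)
  obtain ⟨Z, hZ, hZnon, hZA, himg⟩ := master s hTT'
  obtain ⟨x, hx⟩ := nonempty_of_mem s.hB
  refine ⟨hθ, Aᶜ, Z, ?_, ?_, hZ, ?_, ?_, himg⟩
  · rw [h1, compl_compl]
    exact Sym2.eq_swap
  · refine ⟨x, ?_, spr_restrict s hx⟩
    rw [compl_compl]
    exact s.hBA hx
  · intro h
    obtain ⟨z, hz⟩ := hZnon
    exact (Finset.mem_compl.1 (h ▸ hz)) (hZA hz)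
  · exact Finset.disjoint_left.2 (fun {y} hy hyZ => (Finset.mem_compl.1 hy) (hZA hyZ))

end PhyloTree
/-- Lemma 1: if `θ, θ' ∈ O_TBR(T)` are distinct TBR
operations with `θ(T) = θ'(T)`, then `θ ∈ O_NNI(T)`. -/
theorem redundant_tbr_is_nni (n : ℕ) (hn : 4 ≤ n) (T : PhyloTree n)
    (θ θ' : PhyloTree.Move n) (hθ : θ ∈ T.OTBR) (hθ' : θ' ∈ T.OTBR)
    (hne : θ ≠ θ') (heq : θ.2 = θ'.2) :
    θ ∈ T.ONNI := by
  classical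
  obtain ⟨hT2ne, A₀, hθ1, hA₀T, hA₀T2, hrA, hrAc⟩ := id hθ
  obtain ⟨hT2ne', B₀, hθ'1, hB₀T, hB₀T2, hrB, hrBc⟩ := id hθ'
  rw [← heq] at hB₀T2 hrB hrBc
  have hfst : θ.1 ≠ θ'.1 := fun h => hne (Prod.ext h heq)
  have hBA₀ : B₀ ≠ A₀ := by
    rintro rfl
    exact hfst (by rw [hθ1, hθ'1])
  have hBA₀c : B₀ ≠ A₀ᶜ := by
    rintro rfl
    refine hfst ?_
    rw [hθ1, hθ'1, compl_compl]
    exact Sym2.eq_swap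
  have hswap1 : θ.1 = Sym2.mk A₀ᶜ A₀ᶜᶜ := by
    rw [compl_compl, hθ1]
    exact Sym2.eq_swap
  rcases T.compatible A₀ hA₀T B₀ hB₀T with h | h | h | h
  · -- A₀ ⊆ B₀ : use (A₀ᶜ, B₀ᶜ)
    have hBA : B₀ᶜ ⊆ A₀ᶜ := fun y hy => Finset.mem_compl.2
      (fun h' => (Finset.mem_compl.1 hy) (h h'))
    have hBneA : B₀ᶜ ≠ A₀ᶜ := by
      intro h'
      apply hBA₀
      have := congrArg (·ᶜ) h'
      simpa using this
    refine PhyloTree.assemble hθ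
      ⟨T.compl_mem _ hA₀T, θ.2.compl_mem _ hA₀T2, T.compl_mem _ hB₀T, θ.2.compl_mem _ hB₀T2,
        hBA, hBneA, hrAc, by rw [compl_compl]; exact hrA, hrBc,
        by rw [compl_compl]; exact hrB⟩ hswap1
  · -- B₀ ⊆ A₀ : use (A₀, B₀)
    exact PhyloTree.assemble hθ
      ⟨hA₀T, hA₀T2, hB₀T, hB₀T2, h, hBA₀, hrA, hrAc, hrB, hrBc⟩ hθ1
  · -- Disjoint A₀ B₀ : use (A₀ᶜ, B₀)
    have hBA : B₀ ⊆ A₀ᶜ := fun y hy => Finset.mem_compl.2 (Finset.disjoint_right.1 h hy)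
    refine PhyloTree.assemble hθ
      ⟨T.compl_mem _ hA₀T, θ.2.compl_mem _ hA₀T2, hB₀T, hB₀T2, hBA, hBA₀c, hrAc,
        by rw [compl_compl]; exact hrA, hrB, hrBc⟩ hswap1
  · -- A₀ ∪ B₀ = univ : use (A₀, B₀ᶜ)
    have hBA : B₀ᶜ ⊆ A₀ := by
      intro y hy
      have := (Finset.eq_univ_iff_forall.1 h) y
      rw [Finset.mem_union] at this
      rcases this with h' | h'
      · exact h'
      · exact absurd h' (Finset.mem_compl.1 hy)
    have hBneA : B₀ᶜ ≠ A₀ := by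
      intro h'
      apply hBA₀c
      have := congrArg (·ᶜ) h'
      simpa using this
    exact PhyloTree.assemble hθ
      ⟨hA₀T, hA₀T2, T.compl_mem _ hB₀T, θ.2.compl_mem _ hB₀T2, hBA, hBneA, hrA, hrAc,
        hrBc, by rw [compl_compl]; exact hrB⟩ hθ1
end
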